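/- arXiv:0910.2989 — 8 statements merged into one kernel-verified Lean document; each statement's English description precedes it below -/
import Mathlib

section
/- Assume Schanuel's conjecture for ℂ. Then exp is injective on the algebraic numbers: if a and b are algebraic complex numbers with exp(a) = exp(b), then a = b. -/
def SchanuelConjecture : Prop :=
  ∀ (n : ℕ) (z : Fin n → ℂ), LinearIndependent ℚ z →
    ∃ s : Finset (Fin n ⊕ Fin n), n ≤ s.card ∧
      AlgebraicIndependent ℚ
        (fun i : s => Sum.elim z (fun j => Complex.exp (z j)) i)

theorem exp_injective_on_algebraic (hSch : SchanuelConjecture)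
    (a b : ℂ) (ha : IsAlgebraic ℚ a) (hb : IsAlgebraic ℚ b)
    (h : Complex.exp a = Complex.exp b) : a = b := by
  by_contra hne
  have hsub : a - b ≠ 0 := sub_ne_zero.mpr hne
  have hli : LinearIndependent ℚ (fun _ : Fin 1 => a - b) := by
    apply LinearIndependent.of_subsingleton 0
    exact hsub
  obtain ⟨s, hcard, hind⟩ := hSch 1 (fun _ => a - b) hli
  have hsnone : s.Nonempty := Finset.card_pos.mp (by omega)
  obtain ⟨i, hi⟩ := hsnone
  have htrans := hind.transcendental ⟨i, hi⟩
  have halg : IsAlgebraic ℚ (Sum.elim (fun _ : Fin 1 => a - b)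
      (fun _ : Fin 1 => Complex.exp (a - b)) i) := by
    rcases i with j | j
    · exact (isAlgebraic_iff_isIntegral.mpr ((isAlgebraic_iff_isIntegral.mp ha).sub (isAlgebraic_iff_isIntegral.mp hb)))
    · simp only [Sum.elim_inr]
      rw [Complex.exp_sub, h, div_self (Complex.exp_ne_zero b)]
      exact isAlgebraic_one
  exact htrans halg
end

section
/- Assume Schanuel's conjecture for ℂ. If a and b are algebraic complex numbers with exp(exp(a)) = exp(exp(b)), then a = b. -/
/-- A rational linear combination of algebraic numbers is algebraic. -/
lemma isAlgebraic_sum_smul {n : ℕ} {v : Fin n → ℂ} (hv : ∀ i, IsAlgebraic ℚ (v i))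
    (g : Fin n → ℚ) : IsAlgebraic ℚ (∑ i, g i • v i) := by
  rw [isAlgebraic_iff_isIntegral]
  refine IsIntegral.sum _ (fun i _ => ?_)
  have : g i • v i = ((g i : ℂ)) * v i := by
    simp [Rat.smul_def]
  rw [this]
  exact ((isAlgebraic_iff_isIntegral.1 (isAlgebraic_rat ℚ (g i)))).mul
    (isAlgebraic_iff_isIntegral.1 (hv i))

/-- Extend a family of algebraic, linearly independent numbers by a transcendental one. -/
lemma li_cons_transcendental {n : ℕ} {v : Fin n → ℂ} (hli : LinearIndependent ℚ v)
    (hv : ∀ i, IsAlgebraic ℚ (v i)) {t : ℂ} (ht : Transcendental ℚ t) :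
    LinearIndependent ℚ (Fin.cons t v : Fin (n + 1) → ℂ) := by
  rw [linearIndependent_fin_cons]
  refine ⟨hli, fun hmem => ?_⟩
  rw [Finsupp.mem_span_range_iff_exists_finsupp] at hmem
  obtain ⟨c, hc⟩ := hmem
  apply ht
  have : t = ∑ i, (fun i => c i) i • v i := by
    rw [← hc, Finsupp.sum_fintype]
    intro i; simp
  rw [this]
  exact isAlgebraic_sum_smul hv _

/-- Extract from Schanuel's conjecture algebraic independence of a chosen
`n`-element subfamily, given that all the other values are algebraic. -/
lemma schanuel_tuple (hSch : SchanuelConjecture) {n : ℕ} (z : Fin n → ℂ)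
    (hz : LinearIndependent ℚ z) (f : Fin n → Fin n ⊕ Fin n)
    (hf : Function.Injective f)
    (halg : ∀ i, i ∉ Set.range f →
      IsAlgebraic ℚ (Sum.elim z (fun j => Complex.exp (z j)) i)) :
    AlgebraicIndependent ℚ (fun j => Sum.elim z (fun j => Complex.exp (z j)) (f j)) := by
  obtain ⟨s, hcard, hind⟩ := hSch n z hz
  have hsub : s ⊆ Finset.univ.image f := by
    intro i hi
    by_contra hiT
    refine (hind.transcendental ⟨i, hi⟩) (halg i ?_)
    rintro ⟨j, rfl⟩
    exact hiT (Finset.mem_image_of_mem f (Finset.mem_univ j))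
  have hs : s = Finset.univ.image f := by
    refine Finset.eq_of_subset_of_card_le hsub ?_
    rwa [Finset.card_image_of_injective _ hf, Finset.card_univ, Fintype.card_fin]
  have hmem : ∀ j, f j ∈ s := by
    intro j; rw [hs]; exact Finset.mem_image_of_mem f (Finset.mem_univ j)
  exact hind.comp (fun j => (⟨f j, hmem j⟩ : s))
    (fun j1 j2 hj => hf (by simpa using congrArg Subtype.val hj))

/-- An algebraically independent family kills no nonzero polynomial. -/
lemma no_relation {k : ℕ} {w : Fin k → ℂ} (hw : AlgebraicIndependent ℚ w)
    (p : MvPolynomial (Fin k) ℚ) (h0 : MvPolynomial.aeval w p = 0)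
    (y : Fin k → ℚ) (hy : MvPolynomial.aeval y p ≠ 0) : False := by
  have hp : p = 0 := algebraicIndependent_iff.1 hw p h0
  rw [hp] at hy
  simp at hy

/-- Assuming Schanuel, a nonzero number whose exponential is 1 is transcendental. -/
lemma transcendental_of_exp_eq_one (hSch : SchanuelConjecture) {w : ℂ}
    (hw : w ≠ 0) (he : Complex.exp w = 1) : Transcendental ℚ w := by
  have hli : LinearIndependent ℚ ![w] := by
    refine (linearIndependent_unique_iff (v := ![w])).2 ?_
    simpa using hw
  have hind := schanuel_tuple hSch ![w] hli ![Sum.inl 0]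
    (fun j1 j2 _ => Subsingleton.elim j1 j2)
    (by
      rintro (i | i) hi
      · exact absurd ⟨0, by simp [Fin.eq_zero i]⟩ hi
      · simpa [he] using isAlgebraic_one)
  have := hind.transcendental 0
  simpa using this

theorem exp_exp_injective_on_algebraic (hSch : SchanuelConjecture)
    (a b : ℂ) (ha : IsAlgebraic ℚ a) (hb : IsAlgebraic ℚ b)
    (h : Complex.exp (Complex.exp a) = Complex.exp (Complex.exp b)) : a = b := by
  set c := Complex.exp a with hc
  set d := Complex.exp b with hd
  have hdne : d ≠ 0 := Complex.exp_ne_zero b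
  -- Step 1 : exp a = exp b
  have hcd : c = d := by
    by_contra hne
    have ht0 : c - d ≠ 0 := sub_ne_zero.2 hne
    have hexp1 : Complex.exp (c - d) = 1 := by
      rw [Complex.exp_sub, h, div_self (Complex.exp_ne_zero _)]
    set t := c - d with htdef
    have htr : Transcendental ℚ t := transcendental_of_exp_eq_one hSch ht0 hexp1
    by_cases hli : LinearIndependent ℚ ![a, b]
    · -- a, b linearly independent over ℚ : use (t, a, b)
      have hz : LinearIndependent ℚ ![t, a, b] := by
        refine li_cons_transcendental hli ?_ htr
        intro i; fin_cases i <;> simpa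
      have hind := schanuel_tuple hSch ![t, a, b] hz ![Sum.inl 0, Sum.inr 1, Sum.inr 2]
        (by
          intro j1 j2 hj
          fin_cases j1 <;> fin_cases j2 <;> simp_all)
        (by
          intro i hi
          rcases i with i | i
          · fin_cases i
            · exact absurd ⟨0, by simp⟩ hi
            · simpa using ha
            · simpa using hb
          · fin_cases i
            · simpa [hexp1] using (isAlgebraic_one : IsAlgebraic ℚ (1 : ℂ))
            · exact absurd ⟨1, by simp⟩ hi
            · exact absurd ⟨2, by simp⟩ hi)
      have hw : (fun j => Sum.elim ![t, a, b]
          (fun j => Complex.exp (![t, a, b] j))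
          (![Sum.inl 0, Sum.inr 1, Sum.inr 2] j)) = ![t, c, d] := by
        funext j; fin_cases j <;> simp [hc, hd]
      rw [hw] at hind
      refine no_relation hind
        (MvPolynomial.X 0 - MvPolynomial.X 1 + MvPolynomial.X 2) ?_ ![1, 0, 0] ?_
      · simp [htdef]
      · simp
    · -- a, b linearly dependent
      rw [linearIndependent_fin2] at hli
      push_neg at hli
      by_cases hb0 : b = 0
      · -- b = 0, so d = 1; a ≠ 0 (else c = d)
        have hd1 : d = 1 := by rw [hd, hb0, Complex.exp_zero]
        have ha0 : a ≠ 0 := by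
          intro ha0
          exact hne (by rw [hc, hd, ha0, hb0])
        have hz : LinearIndependent ℚ ![t, a] := by
          refine li_cons_transcendental ((linearIndependent_unique_iff (v := ![a])).2 (by simpa using ha0))
            (by intro i; fin_cases i; simpa) htr
        have hind := schanuel_tuple hSch ![t, a] hz ![Sum.inl 0, Sum.inr 1]
          (by intro j1 j2 hj; fin_cases j1 <;> fin_cases j2 <;> simp_all)
          (by
            intro i hi
            rcases i with i | i
            · fin_cases i
              · exact absurd ⟨0, by simp⟩ hi
              · simpa using ha
            · fin_cases i
              · simpa [hexp1] using (isAlgebraic_one : IsAlgebraic ℚ (1 : ℂ))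
              · exact absurd ⟨1, by simp⟩ hi)
        have hw : (fun j => Sum.elim ![t, a]
            (fun j => Complex.exp (![t, a] j))
            (![Sum.inl 0, Sum.inr 1] j)) = ![t, c] := by
          funext j; fin_cases j <;> simp [hc]
        rw [hw] at hind
        refine no_relation hind
          (MvPolynomial.X 0 - MvPolynomial.X 1 + 1) ?_ ![1, 1] ?_
        · have : t - c + 1 = 0 := by rw [htdef, hd1]; ring
          simpa using this
        · simp
      · -- a = r • b with b ≠ 0
        obtain ⟨r, hr⟩ := hli (by simpa using hb0)
        have hrb : a = (r : ℂ) * b := by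
          have := hr.symm
          simpa [Rat.smul_def] using this
        have hz : LinearIndependent ℚ ![t, b] := by
          refine li_cons_transcendental ((linearIndependent_unique_iff (v := ![b])).2 (by simpa using hb0))
            (by intro i; fin_cases i; simpa) htr
        have hind := schanuel_tuple hSch ![t, b] hz ![Sum.inl 0, Sum.inr 1]
          (by intro j1 j2 hj; fin_cases j1 <;> fin_cases j2 <;> simp_all)
          (by
            intro i hi
            rcases i with i | i
            · fin_cases i
              · exact absurd ⟨0, by simp⟩ hi
              · simpa using hb
            · fin_cases i
              · simpa [hexp1] using (isAlgebraic_one : IsAlgebraic ℚ (1 : ℂ))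
              · exact absurd ⟨1, by simp⟩ hi)
        have hw : (fun j => Sum.elim ![t, b]
            (fun j => Complex.exp (![t, b] j))
            (![Sum.inl 0, Sum.inr 1] j)) = ![t, d] := by
          funext j; fin_cases j <;> simp [hd]
        rw [hw] at hind
        -- the multiplicative relation c ^ r.den = d ^ r.num
        have hqa : (r.den : ℂ) * a = (r.num : ℂ) * b := by
          rw [hrb, ← mul_assoc]
          congr 1
          have : ((r.den : ℚ) * r : ℚ) = (r.num : ℚ) := by
            rw [mul_comm]; exact_mod_cast Rat.mul_den_eq_num r
          exact_mod_cast congrArg (fun x : ℚ => (x : ℂ)) this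
        have hpow : c ^ r.den = d ^ r.num := by
          rw [hc, hd, ← Complex.exp_nat_mul, ← Complex.exp_int_mul, hqa]
        have hct : c = t + d := by rw [htdef]; ring
        by_cases hp : 0 ≤ r.num
        · set m := r.num.toNat with hm
          have hdm : d ^ r.num = d ^ m := by
            rw [hm, ← zpow_natCast, Int.toNat_of_nonneg hp]
          refine no_relation hind
            ((MvPolynomial.X 0 + MvPolynomial.X 1) ^ r.den - MvPolynomial.X 1 ^ m)
            ?_ ![1, 1] ?_
          · have : (t + d) ^ r.den - d ^ m = 0 := by
              rw [← hct, hpow, hdm, sub_self]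
            simpa using this
          · have h2 : (1 : ℚ) < 2 ^ r.den := one_lt_pow₀ (by norm_num) r.den_nz
            simp only [map_sub, map_pow, map_add, MvPolynomial.aeval_X]
            norm_num
            intro hcontra
            linarith
        · set m := (-r.num).toNat with hm
          have hdm : d ^ r.num * d ^ m = 1 := by
            rw [hm, ← zpow_natCast, Int.toNat_of_nonneg (by omega : (0:ℤ) ≤ -r.num),
              ← zpow_add₀ hdne]
            simp
          refine no_relation hind
            ((MvPolynomial.X 0 + MvPolynomial.X 1) ^ r.den * MvPolynomial.X 1 ^ m - 1)
            ?_ ![1, 1] ?_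
          · have : (t + d) ^ r.den * d ^ m - 1 = 0 := by
              rw [← hct, hpow, hdm, sub_self]
            simpa using this
          · have h2 : (1 : ℚ) < 2 ^ r.den := one_lt_pow₀ (by norm_num) r.den_nz
            simp only [map_sub, map_mul, map_pow, map_add, map_one, MvPolynomial.aeval_X]
            norm_num
            intro hcontra
            linarith
  -- Step 2 : conclude a = b
  by_contra hab
  have h1 : Complex.exp (a - b) = 1 := by
    rw [Complex.exp_sub, ← hc, ← hd, hcd, div_self hdne]
  refine (transcendental_of_exp_eq_one hSch (sub_ne_zero.2 hab) h1) ?_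
  rw [isAlgebraic_iff_isIntegral]
  exact (isAlgebraic_iff_isIntegral.1 ha).sub (isAlgebraic_iff_isIntegral.1 hb)
end

section
/- Assume Schanuel's conjecture for ℂ. Then for every nonzero algebraic number α, the numbers exp(α) and exp(exp(α)) are algebraically independent over ℚ; in particular exp(exp(α)) is transcendental. -/
lemma pair_of_family {ι : Type*} (x : ι → ℂ) (h : AlgebraicIndependent ℚ x)
    (i j : ι) (hij : i ≠ j) : AlgebraicIndependent ℚ ![x i, x j] := by
  have hinj : Function.Injective (![i, j] : Fin 2 → ι) := by
    intro a b hab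
    fin_cases a <;> fin_cases b <;> simp_all <;> exact absurd hab (Ne.symm hij)
  have := h.comp ![i, j] hinj
  convert this using 1
  funext k
  fin_cases k <;> simp

lemma exp_transcendental (hSch : SchanuelConjecture)
    (α : ℂ) (hα : IsAlgebraic ℚ α) (hne : α ≠ 0) :
    Transcendental ℚ (Complex.exp α) := by
  have hli : LinearIndependent ℚ (![α] : Fin 1 → ℂ) := by
    apply linearIndependent_unique_iff.mpr
    simpa using hne
  obtain ⟨s, hcard, hAI⟩ := hSch 1 ![α] hli
  have hs : s.Nonempty := Finset.card_pos.mp (by omega)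
  obtain ⟨e, he⟩ := hs
  have htr := hAI.transcendental ⟨e, he⟩
  rcases e with i | j
  · fin_cases i
    exact absurd hα (by simpa [Transcendental] using htr)
  · fin_cases j
    simpa using htr

theorem exp_exp_alg_indep (hSch : SchanuelConjecture)
    (α : ℂ) (hα : IsAlgebraic ℚ α) (hne : α ≠ 0) :
    AlgebraicIndependent ℚ ![Complex.exp α, Complex.exp (Complex.exp α)] ∧
      Transcendental ℚ (Complex.exp (Complex.exp α)) := by
  have hexp := exp_transcendental hSch α hα hne
  set z : Fin 2 → ℂ := ![α, Complex.exp α] with hz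
  have hli : LinearIndependent ℚ z := by
    rw [hz, LinearIndependent.pair_iff]
    intro q r hqr
    have hr : r = 0 := by
      by_contra hr
      apply hexp
      have hqr' : (q : ℂ) * α + (r : ℂ) * Complex.exp α = 0 := by
        simpa [Rat.smul_def] using hqr
      have hrC : (r : ℂ) ≠ 0 := by exact_mod_cast hr
      have : Complex.exp α = ((-(q/r) : ℚ) : ℂ) * α := by
        push_cast
        field_simp
        linear_combination hqr'
      rw [this]
      exact ((isAlgebraic_rat ℚ _).isIntegral.mul hα.isIntegral).isAlgebraic
    subst hr
    simp only [zero_smul, add_zero, smul_eq_zero] at hqr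
    exact ⟨hqr.resolve_right hne, rfl⟩
  obtain ⟨s, hcard, hAI⟩ := hSch 2 z hli
  -- values: inl 0 ↦ α, inl 1 ↦ exp α, inr 0 ↦ exp α, inr 1 ↦ exp (exp α)
  have hval : ∀ e ∈ s, Sum.elim z (fun j => Complex.exp (z j)) e
      = Sum.elim z (fun j => Complex.exp (z j)) e := fun _ _ => rfl
  have hnotl0 : (Sum.inl 0 : Fin 2 ⊕ Fin 2) ∉ s := by
    intro h
    have := hAI.transcendental ⟨Sum.inl 0, h⟩
    simp only [Sum.elim_inl, hz] at this
    exact this (by simpa using hα)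
  have hinj := hAI.injective
  have hr1 : (Sum.inr 1 : Fin 2 ⊕ Fin 2) ∈ s := by
    by_contra hr1
    -- then s ⊆ {inl 1, inr 0}, both values exp α
    have hsub : s ⊆ {Sum.inl 1, Sum.inr 0} := by
      intro e he
      rcases e with i | j
      · fin_cases i
        · exact absurd he hnotl0
        · simp
      · fin_cases j
        · simp
        · exact absurd he hr1
    have h1 : (Sum.inl 1 : Fin 2 ⊕ Fin 2) ∈ s ∧ (Sum.inr 0 : Fin 2 ⊕ Fin 2) ∈ s := by
      by_contra hc
      push_neg at hc
      have : s.card ≤ 1 := by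
        by_contra hcl
        push_neg at hcl
        obtain ⟨a, ha, b, hb, hab⟩ := Finset.one_lt_card.mp hcl
        have ha' := hsub ha
        have hb' := hsub hb
        simp only [Finset.mem_insert, Finset.mem_singleton] at ha' hb'
        rcases ha' with rfl | rfl <;> rcases hb' with rfl | rfl <;> simp_all <;> tauto
      omega
    have := hinj (a₁ := ⟨Sum.inl 1, h1.1⟩) (a₂ := ⟨Sum.inr 0, h1.2⟩) (by simp [hz])
    simpa using this
  obtain ⟨e, he⟩ : ∃ e, e ∈ s.erase (Sum.inr 1) := by
    apply Finset.card_pos.mp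
    rw [Finset.card_erase_of_mem hr1]
    omega
  rw [Finset.mem_erase] at he
  obtain ⟨hene, hes⟩ := he
  have heval : Sum.elim z (fun j => Complex.exp (z j)) e = Complex.exp α := by
    rcases e with i | j
    · fin_cases i
      · exact absurd hes hnotl0
      · simp [hz]
    · fin_cases j
      · simp [hz]
      · exact absurd rfl hene
  have hpair := pair_of_family _ hAI ⟨e, hes⟩ ⟨Sum.inr 1, hr1⟩ (by simpa using hene)
  simp only [heval, Sum.elim_inr] at hpair
  have hz1 : Complex.exp (z 1) = Complex.exp (Complex.exp α) := by simp [hz]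
  rw [hz1] at hpair
  exact ⟨hpair, hpair.transcendental 1⟩
end

section
/- Assume Schanuel's conjecture for ℂ. Let a₁,…,aₘ ∈ ℚ̄[x] be polynomials with algebraic coefficients and g₁,…,gₘ ∈ ℚ̄[x] be pairwise distinct polynomials with algebraic coefficients, and set p(z) = Σᵢ aᵢ(z)·exp(gᵢ(z)). If β is an algebraic number with p(β) = 0, then either aᵢ(β) = 0 for all i, or there exist i ≠ j with gᵢ(β) = gⱼ(β). -/
theorem schanuel_aux_eval_isAlgebraic (p : Polynomial ℂ) (hp : ∀ k, IsAlgebraic ℚ (p.coeff k))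
    {β : ℂ} (hβ : IsAlgebraic ℚ β) : IsAlgebraic ℚ (Polynomial.eval β p) := by
  have : Polynomial.eval β p ∈ integralClosure ℚ ℂ := by
    rw [Polynomial.eval_eq_sum_range]
    exact Subalgebra.sum_mem _ fun k _ => Subalgebra.mul_mem _
      (isAlgebraic_iff_isIntegral.mp (hp k))
      (Subalgebra.pow_mem _ (isAlgebraic_iff_isIntegral.mp hβ) k)
  exact IsIntegral.isAlgebraic this

theorem schanuel_aux_transcendental_adjoin {ι : Type*} {x : ι → ℂ}
    (hx : AlgebraicIndependent ℚ x) (t : Set ι) (i : ι) (hi : i ∉ t) :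
    Transcendental (Algebra.adjoin ℚ (x '' t)) (x i) := by
  have h1 : AlgebraicIndependent ℚ (x ∘ (Subtype.val : t → ι)) :=
    hx.comp _ Subtype.val_injective
  have hinj : Function.Injective (fun o : Option t => o.elim i Subtype.val) := by
    rintro (_ | o) (_ | o') h
    · rfl
    · simp only [Option.elim] at h; exact absurd (h ▸ o'.2) hi
    · simp only [Option.elim] at h; exact absurd (h ▸ o.2 : i ∈ t) hi
    · simp only [Option.elim] at h; exact congrArg _ (Subtype.val_injective h)
  have h2 : AlgebraicIndependent ℚ (fun o : Option t => o.elim (x i) (x ∘ Subtype.val)) := by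
    have := hx.comp _ hinj
    convert this using 1
    funext o; cases o <;> rfl
  have h3 := (h1.option_iff_transcendental (x i)).mp h2
  rwa [Set.range_comp, Subtype.range_val] at h3

theorem schanuel_aux_mem_adjoin_div (S : Set ℂ) (u : ℂ)
    (hu : u ∈ IntermediateField.adjoin ℚ S) :
    ∃ r s : ℂ, r ∈ Algebra.adjoin ℚ S ∧ s ∈ Algebra.adjoin ℚ S ∧ s ≠ 0 ∧ u = r / s := by
  induction hu using IntermediateField.adjoin_induction with
  | mem z hz => exact ⟨z, 1, Algebra.subset_adjoin hz, one_mem _, one_ne_zero, (div_one z).symm⟩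
  | algebraMap q =>
      exact ⟨algebraMap ℚ ℂ q, 1, Subalgebra.algebraMap_mem _ q, one_mem _, one_ne_zero,
        (div_one _).symm⟩
  | add z w _ _ ihz ihw =>
      obtain ⟨r1, s1, hr1, hs1, hs10, rfl⟩ := ihz
      obtain ⟨r2, s2, hr2, hs2, hs20, rfl⟩ := ihw
      refine ⟨r1 * s2 + r2 * s1, s1 * s2, add_mem (mul_mem hr1 hs2) (mul_mem hr2 hs1),
        mul_mem hs1 hs2, mul_ne_zero hs10 hs20, ?_⟩
      field_simp
  | inv z _ ihz =>
      obtain ⟨r, s, hr, hs, hs0, rfl⟩ := ihz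
      by_cases hr0 : r = 0
      · exact ⟨0, 1, zero_mem _, one_mem _, one_ne_zero, by simp [hr0]⟩
      · exact ⟨s, r, hs, hr, hr0, inv_div r s⟩
  | mul z w _ _ ihz ihw =>
      obtain ⟨r1, s1, hr1, hs1, hs10, rfl⟩ := ihz
      obtain ⟨r2, s2, hr2, hs2, hs20, rfl⟩ := ihw
      exact ⟨r1 * r2, s1 * s2, mul_mem hr1 hr2, mul_mem hs1 hs2, mul_ne_zero hs10 hs20,
        div_mul_div_comm r1 s1 r2 s2⟩

theorem schanuel_aux_algIndep_integralClosure {n : ℕ} {x : Fin n → ℂ}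
    (hx : AlgebraicIndependent ℚ x) :
    AlgebraicIndependent (integralClosure ℚ ℂ) x := by
  refine algebraicIndependent_of_finite_type' (fun a b h => Subtype.ext h) ?_
  intro t _ _ i hi
  have hT := schanuel_aux_transcendental_adjoin hx t i hi
  intro hAlg
  apply hT
  set K := integralClosure ℚ ℂ with hK
  set S : Set ℂ := x '' t with hS
  set M := IntermediateField.adjoin ℚ S with hM
  set L := IntermediateField.adjoin M ((K : Subalgebra ℚ ℂ) : Set ℂ) with hL
  -- (i) every element of Algebra.adjoin K S lies in L
  have hsub : ∀ c ∈ Algebra.adjoin K S, c ∈ L := by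
    intro c hc
    induction hc using Algebra.adjoin_induction with
    | mem z hz =>
        have hzM : z ∈ M := IntermediateField.subset_adjoin ℚ S hz
        exact L.algebraMap_mem ⟨z, hzM⟩
    | algebraMap r => exact IntermediateField.subset_adjoin _ _ r.2
    | add z w _ _ ihz ihw => exact add_mem ihz ihw
    | mul z w _ _ ihz ihw => exact mul_mem ihz ihw
  -- move the algebraicity witness into L
  have hLx : IsAlgebraic L (x i) := by
    obtain ⟨p, hp0, hpe⟩ := hAlg
    let φ : (Algebra.adjoin K S) →+* L :=
      { toFun := fun c => ⟨c.1, hsub _ c.2⟩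
        map_one' := rfl
        map_mul' := fun _ _ => rfl
        map_zero' := rfl
        map_add' := fun _ _ => rfl }
    have hφ : Function.Injective φ := fun a b h => Subtype.ext (show (a:ℂ) = (b:ℂ) from congrArg (fun m : L => (m : ℂ)) h)
    refine ⟨p.map φ, by rwa [Ne, Polynomial.map_eq_zero_iff hφ], ?_⟩
    rw [Polynomial.aeval_def, Polynomial.eval₂_map]
    have : (algebraMap L ℂ).comp (φ : (Algebra.adjoin K S) →+* L)
        = algebraMap (Algebra.adjoin K S) ℂ := RingHom.ext fun c => rfl
    rw [this, ← Polynomial.aeval_def]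
    exact hpe
  -- (ii) L is algebraic over M
  haveI hML : Algebra.IsAlgebraic M L := by
    refine IntermediateField.isAlgebraic_adjoin fun z hz => ?_
    exact IsIntegral.tower_top (hz : IsIntegral ℚ z)
  haveI : Algebra.IsIntegral M L := Algebra.isAlgebraic_iff_isIntegral.mp hML
  -- (iii) x i is algebraic over M
  have hMx : IsAlgebraic M (x i) := (isIntegral_trans (x i) hLx.isIntegral).isAlgebraic
  -- (iv) pull back via fraction ring
  have hle : Algebra.adjoin ℚ S ≤ M.toSubalgebra :=
    Algebra.adjoin_le (IntermediateField.subset_adjoin ℚ S)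
  letI : Algebra (Algebra.adjoin ℚ S) M := (Subalgebra.inclusion hle).toAlgebra
  haveI : IsScalarTower (Algebra.adjoin ℚ S) M ℂ := IsScalarTower.of_algebraMap_eq fun a => rfl
  haveI : IsFractionRing (Algebra.adjoin ℚ S) M := by
    constructor
    constructor
    · rintro ⟨y, hy⟩
      refine isUnit_iff_ne_zero.mpr fun h => ?_
      have hy0 : y ≠ 0 := mem_nonZeroDivisors_iff_ne_zero.mp hy
      apply hy0
      ext
      exact congrArg (fun m : M => (m : ℂ)) h
    · rintro ⟨z, hz⟩
      obtain ⟨r, s, hr, hs, hs0, heq⟩ := schanuel_aux_mem_adjoin_div S z hz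
      have hsne : (⟨s, hs⟩ : Algebra.adjoin ℚ S) ≠ 0 := fun h => hs0 (congrArg Subtype.val h)
      refine ⟨(⟨r, hr⟩, ⟨⟨s, hs⟩, mem_nonZeroDivisors_of_ne_zero hsne⟩), ?_⟩
      ext
      show z * s = r
      rw [heq, div_mul_cancel₀ _ hs0]
    · intro a b h
      refine ⟨1, ?_⟩
      have : (a : ℂ) = (b : ℂ) := congrArg (fun m : M => (m : ℂ)) h
      simpa using Subtype.ext this
  exact (IsFractionRing.isAlgebraic_iff (Algebra.adjoin ℚ S) M ℂ).mpr hMx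

theorem schanuel_aux_monomial_relation {n m : ℕ} {t : Fin n → ℂ}
    (ht : AlgebraicIndependent ℚ t)
    {α : Fin m → ℂ} (hα : ∀ i, IsAlgebraic ℚ (α i))
    {d : Fin m → Fin n → ℕ} (hd : Function.Injective d)
    (hrel : ∑ i, α i * ∏ j, t j ^ d i j = 0) : ∀ i, α i = 0 := by
  have ht' := schanuel_aux_algIndep_integralClosure ht
  set K := integralClosure ℚ ℂ with hK
  set P : MvPolynomial (Fin n) K :=
    ∑ i, MvPolynomial.monomial (Finsupp.equivFunOnFinite.symm (d i))
      (⟨α i, isAlgebraic_iff_isIntegral.mp (hα i)⟩ : K) with hP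
  have haev : MvPolynomial.aeval t P = 0 := by
    rw [hP, map_sum, ← hrel]
    refine Finset.sum_congr rfl fun i _ => ?_
    rw [MvPolynomial.aeval_monomial, Finsupp.prod_fintype _ _ fun j => pow_zero _]
    rfl
  have hP0 : P = 0 := ht' (by rw [haev, map_zero])
  intro i
  have hc := congrArg (MvPolynomial.coeff (Finsupp.equivFunOnFinite.symm (d i))) hP0
  rw [hP, MvPolynomial.coeff_sum, MvPolynomial.coeff_zero] at hc
  simp only [MvPolynomial.coeff_monomial] at hc
  simp only [EmbeddingLike.apply_eq_iff_eq, hd.eq_iff] at hc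
  rw [Finset.sum_ite_eq' Finset.univ i] at hc
  simp only [Finset.mem_univ, if_true] at hc
  exact congrArg Subtype.val hc

theorem collapsing_at_algebraic_zeros (hSch : SchanuelConjecture)
    (m : ℕ) (a g : Fin m → Polynomial ℂ)
    (ha : ∀ i k, IsAlgebraic ℚ ((a i).coeff k))
    (hg : ∀ i k, IsAlgebraic ℚ ((g i).coeff k))
    (hgdist : ∀ i j, i ≠ j → g i ≠ g j)
    (β : ℂ) (hβ : IsAlgebraic ℚ β)
    (hzero : ∑ i, (a i).eval β * Complex.exp ((g i).eval β) = 0) :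
    (∀ i, (a i).eval β = 0) ∨ ∃ i j, i ≠ j ∧ (g i).eval β = (g j).eval β := by
  by_contra hcon
  push_neg at hcon
  obtain ⟨⟨i0, hi0⟩, hdist⟩ := hcon
  set γ : Fin m → ℂ := fun i => (g i).eval β with hγ
  set α : Fin m → ℂ := fun i => (a i).eval β with hα
  have hzero' : ∑ i, α i * Complex.exp (γ i) = 0 := hzero
  have hγalg : ∀ i, IsAlgebraic ℚ (γ i) := fun i => schanuel_aux_eval_isAlgebraic _ (hg i) hβ
  have hαalg : ∀ i, IsAlgebraic ℚ (α i) := fun i => schanuel_aux_eval_isAlgebraic _ (ha i) hβ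
  have hγinj : Function.Injective γ := by
    intro i j h
    by_contra hne
    exact hdist i j hne h
  -- the span of the exponents
  set V : Submodule ℚ ℂ := Submodule.span ℚ (Set.range γ) with hV
  haveI : FiniteDimensional ℚ V := FiniteDimensional.span_of_finite ℚ (Set.finite_range γ)
  set n : ℕ := Module.finrank ℚ V with hn
  set b : Module.Basis (Fin n) ℚ V := Module.finBasis ℚ V with hb
  have hγmem : ∀ i, γ i ∈ V := fun i => Submodule.subset_span ⟨i, rfl⟩
  set q : Fin m → Fin n → ℚ := fun i j => b.repr ⟨γ i, hγmem i⟩ j with hq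
  set D : ℕ := ∏ i, ∏ j, (q i j).den with hD
  have hDpos : 0 < D := Finset.prod_pos fun i _ => Finset.prod_pos fun j _ => (q i j).pos
  have hD0 : (D : ℚ) ≠ 0 := Nat.cast_ne_zero.mpr hDpos.ne'
  have hDC0 : (D : ℂ) ≠ 0 := Nat.cast_ne_zero.mpr hDpos.ne'
  have hDden : ∀ i j, ((q i j).den : ℕ) ∣ D := by
    intro i j
    have h1 : (q i j).den ∣ ∏ j', (q i j').den := Finset.dvd_prod_of_mem _ (Finset.mem_univ j)
    have h2 : (∏ j', (q i j').den) ∣ D :=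
      Finset.dvd_prod_of_mem (fun i' => ∏ j', (q i' j').den) (Finset.mem_univ i)
    exact dvd_trans h1 h2
  set c : Fin m → Fin n → ℤ := fun i j => (q i j).num * ((D / (q i j).den : ℕ) : ℤ) with hc
  have hcq : ∀ i j, (c i j : ℚ) = q i j * D := by
    intro i j
    have hden : ((q i j).den : ℚ) ≠ 0 := Nat.cast_ne_zero.mpr (q i j).den_nz
    have hmul : ((q i j).den : ℚ) * ((D / (q i j).den : ℕ) : ℚ) = (D : ℚ) := by
      exact_mod_cast congrArg (Nat.cast (R := ℚ)) (Nat.mul_div_cancel' (hDden i j))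
    rw [hc]
    push_cast
    calc ((q i j).num : ℚ) * ((D / (q i j).den : ℕ) : ℚ)
        = ((q i j).num / (q i j).den) * (((q i j).den : ℚ) * ((D / (q i j).den : ℕ) : ℚ)) := by
          field_simp
      _ = q i j * D := by rw [Rat.num_div_den, hmul]
  set z : Fin n → ℂ := fun j => (D : ℚ)⁻¹ • (b j : ℂ) with hz
  have hcC : ∀ i j, ((c i j : ℂ)) = (q i j : ℂ) * (D : ℂ) := by
    intro i j
    have := congrArg (fun r : ℚ => (r : ℂ)) (hcq i j)
    push_cast at this
    exact this
  have hγeq : ∀ i, γ i = ∑ j, (c i j : ℂ) * z j := by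
    intro i
    have h1 := congrArg (V.subtype) (b.sum_repr ⟨γ i, hγmem i⟩)
    rw [map_sum] at h1
    simp only [map_smul, Submodule.coe_subtype] at h1
    rw [← h1]
    refine Finset.sum_congr rfl fun j _ => ?_
    show q i j • (b j : ℂ) = (c i j : ℂ) * ((D : ℚ)⁻¹ • (b j : ℂ))
    rw [Rat.smul_def, Rat.smul_def, hcC i j]
    push_cast
    field_simp
  -- linear independence of z
  have hbli : LinearIndependent ℚ (fun j => (b j : ℂ)) :=
    b.linearIndependent.map' V.subtype (Submodule.ker_subtype V)
  have hzli : LinearIndependent ℚ z := by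
    have hker : LinearMap.ker ((D : ℚ)⁻¹ • (LinearMap.id : ℂ →ₗ[ℚ] ℂ)) = ⊥ := by
      rw [LinearMap.ker_smul _ _ (inv_ne_zero hD0), LinearMap.ker_id]
    have h2 := hbli.map' _ hker
    have hz2 : z = (((D : ℚ)⁻¹ • (LinearMap.id : ℂ →ₗ[ℚ] ℂ)) : ℂ →ₗ[ℚ] ℂ) ∘ (fun j => (b j : ℂ)) := by
      funext j
      simp [hz]
    rw [hz2]
    exact h2
  -- algebraicity of z
  have hVle : V ≤ Subalgebra.toSubmodule (integralClosure ℚ ℂ) := by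
    rw [hV, Submodule.span_le]
    rintro w ⟨i, rfl⟩
    exact isAlgebraic_iff_isIntegral.mp (hγalg i)
  have hzalg : ∀ j, IsAlgebraic ℚ (z j) := by
    intro j
    have h1 : (b j : ℂ) ∈ Subalgebra.toSubmodule (integralClosure ℚ ℂ) := hVle (b j).2
    have h2 : z j ∈ Subalgebra.toSubmodule (integralClosure ℚ ℂ) :=
      Submodule.smul_mem _ _ h1
    exact IsIntegral.isAlgebraic h2
  -- Schanuel
  obtain ⟨s, hcard, hindep⟩ := hSch n z hzli
  have hmem : ∀ u ∈ s, ∃ j, u = Sum.inr j := by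
    intro u hu
    rcases u with j | j
    · exfalso
      have htr := hindep.transcendental ⟨Sum.inl j, hu⟩
      exact htr (hzalg j)
    · exact ⟨j, rfl⟩
  have hseq : s = Finset.univ.image Sum.inr := by
    refine Finset.eq_of_subset_of_card_le (fun u hu => ?_) ?_
    · obtain ⟨j, rfl⟩ := hmem u hu
      exact Finset.mem_image_of_mem _ (Finset.mem_univ j)
    · rw [Finset.card_image_of_injective _ Sum.inr_injective, Finset.card_univ, Fintype.card_fin]
      exact hcard
  have hexp : AlgebraicIndependent ℚ fun j => Complex.exp (z j) := by
    have hmemF : ∀ j : Fin n, Sum.inr j ∈ s := by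
      intro j
      rw [hseq]
      exact Finset.mem_image_of_mem _ (Finset.mem_univ j)
    have hfinj : Function.Injective (fun j : Fin n => (⟨Sum.inr j, hmemF j⟩ : s)) :=
      fun u v h => Sum.inr_injective (congrArg Subtype.val h)
    have h2 := hindep.comp _ hfinj
    have h3 : ((fun i : s => Sum.elim z (fun j' => Complex.exp (z j')) i) ∘
        (fun j : Fin n => (⟨Sum.inr j, hmemF j⟩ : s))) = fun j => Complex.exp (z j) := by
      funext j
      rfl
    rw [h3] at h2
    exact h2
  -- exponential of γ as monomials
  set T : Fin n → ℂ := fun j => Complex.exp (z j) with hT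
  have hT0 : ∀ j, T j ≠ 0 := fun j => Complex.exp_ne_zero _
  have hexpγ : ∀ i, Complex.exp (γ i) = ∏ j, T j ^ (c i j) := by
    intro i
    rw [hγeq i, Complex.exp_sum]
    exact Finset.prod_congr rfl fun j _ => Complex.exp_int_mul _ _
  set B : ℤ := ∑ i, ∑ j, |c i j| with hB
  have hcB : ∀ i j, 0 ≤ c i j + B := by
    intro i j
    have h1 : |c i j| ≤ ∑ j', |c i j'| :=
      Finset.single_le_sum (f := fun j' => |c i j'|) (fun _ _ => abs_nonneg _) (Finset.mem_univ j)
    have h2 : ∑ j', |c i j'| ≤ B :=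
      Finset.single_le_sum (f := fun i' => ∑ j', |c i' j'|)
        (fun _ _ => Finset.sum_nonneg fun _ _ => abs_nonneg _) (Finset.mem_univ i)
    have := neg_abs_le (c i j)
    omega
  set e : Fin m → Fin n → ℕ := fun i j => (c i j + B).toNat with he
  have heinj : Function.Injective e := by
    intro i i' h
    apply hγinj
    rw [hγeq i, hγeq i']
    refine Finset.sum_congr rfl fun j _ => ?_
    have h2 : (c i j + B).toNat = (c i' j + B).toNat := congrFun h j
    have h3 : c i j = c i' j := by
      have := hcB i j
      have := hcB i' j
      omega
    rw [h3]
  have hrel2 : ∑ i, α i * ∏ j, T j ^ e i j = 0 := by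
    have hmul : (∑ i, α i * Complex.exp (γ i)) * ∏ j, T j ^ B = 0 := by
      rw [hzero', zero_mul]
    rw [← hmul, Finset.sum_mul]
    refine Finset.sum_congr rfl fun i _ => ?_
    rw [hexpγ i, mul_assoc, ← Finset.prod_mul_distrib]
    congr 1
    refine Finset.prod_congr rfl fun j _ => ?_
    rw [← zpow_add₀ (hT0 j), ← Int.toNat_of_nonneg (hcB i j), zpow_natCast]
  exact hi0 (schanuel_aux_monomial_relation hexp hαalg heinj hrel2 i0)
end

section
/- Assume Schanuel's conjecture for ℂ. Let a₁,…,aₘ ∈ ℚ̄[x] be nonzero polynomials and g₁,…,gₘ ∈ ℚ̄[x] pairwise distinct polynomials (m ≥ 1), and set p(z) = Σᵢ aᵢ(z)·exp(gᵢ(z)). Then the set {β ∈ ℂ : β algebraic and p(β) = 0} is finite. -/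
open Polynomial in
lemma algIndep_extendQbar {n : ℕ} (y : Fin n → ℂ)
    (hy : AlgebraicIndependent ℚ y) :
    AlgebraicIndependent (algebraicClosure ℚ ℂ) y := by
  set K := algebraicClosure ℚ ℂ with hK
  rw [algebraicIndependent_iff]
  intro p hp
  by_contra hne
  letI : Algebra (MvPolynomial (Fin n) ℚ) (MvPolynomial (Fin n) K) :=
    (MvPolynomial.map (algebraMap ℚ K)).toAlgebra
  have halgmap : (algebraMap (MvPolynomial (Fin n) ℚ) (MvPolynomial (Fin n) K))
      = MvPolynomial.map (algebraMap ℚ K) := rfl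
  -- p is integral over MvPolynomial (Fin n) ℚ
  have hint : IsIntegral (MvPolynomial (Fin n) ℚ) p := by
    have hsum : p ∈ integralClosure (MvPolynomial (Fin n) ℚ) (MvPolynomial (Fin n) K) := by
      have hps := p.as_sum
      rw [show p = _ from hps]
      apply Subalgebra.sum_mem
      intro v hv
      rw [← mul_one (MvPolynomial.coeff v p), ← MvPolynomial.C_mul_monomial]
      apply mul_mem
      · -- C (coeff v p) is integral
        have hci : IsIntegral ℚ (MvPolynomial.coeff v p) :=
          by haveI : Algebra.IsAlgebraic ℚ K := algebraicClosure.isAlgebraic ℚ ℂ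
             exact (Algebra.IsAlgebraic.isAlgebraic (R := ℚ) (MvPolynomial.coeff v p)).isIntegral
        obtain ⟨q, hqm, hq0⟩ := hci
        refine ⟨q.map (MvPolynomial.C : ℚ →+* MvPolynomial (Fin n) ℚ), hqm.map _, ?_⟩
        rw [Polynomial.eval₂_map]
        have hcomp : (algebraMap (MvPolynomial (Fin n) ℚ) (MvPolynomial (Fin n) K)).comp
            (MvPolynomial.C : ℚ →+* MvPolynomial (Fin n) ℚ)
            = (MvPolynomial.C : K →+* MvPolynomial (Fin n) K).comp (algebraMap ℚ K) := by
          ext r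
          simp [halgmap]
        rw [hcomp]
        have := (Polynomial.hom_eval₂ q (algebraMap ℚ K)
          (MvPolynomial.C : K →+* MvPolynomial (Fin n) K) (MvPolynomial.coeff v p)).symm
        rw [this, hq0, map_zero]
      · -- monomial v 1 is in the image
        have : (MvPolynomial.monomial v (1:↥K)) = algebraMap (MvPolynomial (Fin n) ℚ)
            (MvPolynomial (Fin n) K) (MvPolynomial.monomial v (1:ℚ)) := by
          simp [halgmap, MvPolynomial.map_monomial]
        rw [this]
        exact Subalgebra.algebraMap_mem _ _
    exact hsum
  -- ring hom to ℂ
  set Ψ : MvPolynomial (Fin n) K →+* ℂ :=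
    (MvPolynomial.aeval (R := K) y : MvPolynomial (Fin n) K →ₐ[K] ℂ).toRingHom with hΨ
  have hΨp : Ψ p = 0 := hp
  have hcomp2 : Ψ.comp (algebraMap (MvPolynomial (Fin n) ℚ) (MvPolynomial (Fin n) K))
      = (MvPolynomial.aeval (R := ℚ) y : MvPolynomial (Fin n) ℚ →ₐ[ℚ] ℂ).toRingHom := by
    apply MvPolynomial.ringHom_ext
    · intro r
      simp [hΨ, halgmap, IsScalarTower.algebraMap_apply ℚ K ℂ]
    · intro j
      simp [hΨ, halgmap]
  have key : ∀ (N : ℕ) (f : Polynomial (MvPolynomial (Fin n) ℚ)), f.natDegree ≤ N → f.Monic →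
      Polynomial.eval₂ (algebraMap (MvPolynomial (Fin n) ℚ) (MvPolynomial (Fin n) K)) p f = 0 →
      False := by
    intro N
    induction N with
    | zero =>
      intro f hdeg hmon heq
      have hcoe : f.coeff 0 = 0 := by
        have h1 := congrArg Ψ heq
        rw [Polynomial.hom_eval₂, hcomp2, hΨp, Polynomial.eval₂_at_zero, map_zero] at h1
        exact (algebraicIndependent_iff.mp hy) _ h1
      have hf1 : f = 1 := hmon.natDegree_eq_zero.mp (Nat.le_zero.mp hdeg)
      rw [hf1, Polynomial.coeff_one_zero] at hcoe
      exact one_ne_zero hcoe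
    | succ N ih =>
      intro f hdeg hmon heq
      have hcoe : f.coeff 0 = 0 := by
        have h1 := congrArg Ψ heq
        rw [Polynomial.hom_eval₂, hcomp2, hΨp, Polynomial.eval₂_at_zero, map_zero] at h1
        exact (algebraicIndependent_iff.mp hy) _ h1
      obtain ⟨f', hff'⟩ := Polynomial.X_dvd_iff.mpr hcoe
      have hf'm : f'.Monic := by
        have : (Polynomial.X * f').Monic := hff' ▸ hmon
        exact Polynomial.monic_X.of_mul_monic_left this
      have heq' : Polynomial.eval₂ (algebraMap (MvPolynomial (Fin n) ℚ)
          (MvPolynomial (Fin n) K)) p f' = 0 := by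
        rw [hff', Polynomial.eval₂_mul, Polynomial.eval₂_X] at heq
        rcases mul_eq_zero.mp heq with h | h
        · exact absurd h hne
        · exact h
      refine ih f' ?_ hf'm heq'
      have hd : f.natDegree = f'.natDegree + 1 := by
        rw [hff', (Polynomial.monic_X).natDegree_mul hf'm, Polynomial.natDegree_X]
        omega
      omega
  obtain ⟨f, hfm, hf0⟩ := hint
  exact key f.natDegree f le_rfl hfm hf0

lemma eval_isAlgebraic (p : Polynomial ℂ) (hp : ∀ k, IsAlgebraic ℚ (p.coeff k)) {β : ℂ}
    (hβ : IsAlgebraic ℚ β) : IsAlgebraic ℚ (p.eval β) := by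
  rw [← mem_algebraicClosure_iff]
  rw [Polynomial.eval_eq_sum_range]
  apply sum_mem
  intro k _
  exact mul_mem (mem_algebraicClosure_iff.mpr (hp k))
    (pow_mem (mem_algebraicClosure_iff.mpr hβ) k)

lemma lw_zero (hSch : SchanuelConjecture) (k : ℕ) (α c : Fin k → ℂ)
    (hα : ∀ i, IsAlgebraic ℚ (α i)) (hc : ∀ i, IsAlgebraic ℚ (c i))
    (hinj : Function.Injective α)
    (hsum : ∑ i, c i * Complex.exp (α i) = 0) : ∀ i, c i = 0 := by
  classical
  set K := algebraicClosure ℚ ℂ with hKdef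
  set V : Submodule ℚ ℂ := Submodule.span ℚ (Set.range α) with hVdef
  haveI : FiniteDimensional ℚ V := FiniteDimensional.span_of_finite ℚ (Set.finite_range α)
  set n : ℕ := Module.finrank ℚ V with hndef
  let b : Module.Basis (Fin n) ℚ V := Module.finBasis ℚ V
  have hmemV : ∀ i, α i ∈ V := fun i => Submodule.subset_span (Set.mem_range_self i)
  set q : Fin k → Fin n → ℚ := fun i j => b.repr ⟨α i, hmemV i⟩ j with hqdef
  have hrepr : ∀ i, ∑ j, (q i j : ℂ) * (b j : ℂ) = α i := by
    intro i
    have h1 := b.sum_repr ⟨α i, hmemV i⟩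
    have h2 := congrArg (V.subtype) h1
    rw [map_sum] at h2
    simpa [Rat.smul_def] using h2
  set D : ℕ := ∏ i : Fin k, ∏ j : Fin n, (q i j).den with hDdef
  have hD0 : D ≠ 0 := by
    refine Finset.prod_ne_zero_iff.mpr fun i _ => Finset.prod_ne_zero_iff.mpr fun j _ => ?_
    exact (q i j).den_nz
  have hDC : (D : ℂ) ≠ 0 := Nat.cast_ne_zero.mpr hD0
  have hdvd : ∀ i j, (q i j).den ∣ D := fun i j =>
    dvd_trans (Finset.dvd_prod_of_mem (fun j => (q i j).den) (Finset.mem_univ j))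
      (Finset.dvd_prod_of_mem (fun i => ∏ j, (q i j).den) (Finset.mem_univ i))
  set m : Fin k → Fin n → ℤ := fun i j => (q i j).num * ((D / (q i j).den : ℕ) : ℤ) with hmdef
  have hm : ∀ i j, ((m i j : ℚ)) = q i j * D := by
    intro i j
    have hden : ((q i j).den : ℚ) ≠ 0 := Nat.cast_ne_zero.mpr (q i j).den_nz
    have hcast : ((D / (q i j).den : ℕ) : ℚ) = (D : ℚ) / ((q i j).den : ℚ) :=
      Nat.cast_div (hdvd i j) hden
    have hmq : ((m i j : ℚ)) = ((q i j).num : ℚ) * ((D : ℚ) / ((q i j).den : ℚ)) := by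
      rw [hmdef]
      rw [Int.cast_mul, Int.cast_natCast, hcast]
    rw [hmq]
    conv_rhs => rw [← Rat.num_div_den (q i j)]
    field_simp
  set z : Fin n → ℂ := fun j => ((D : ℂ))⁻¹ * (b j : ℂ) with hzdef
  have hbK : ∀ j, (b j : ℂ) ∈ K := by
    intro j
    have hVle : V ≤ Subalgebra.toSubmodule K.toSubalgebra := by
      rw [hVdef]
      apply Submodule.span_le.mpr
      rintro _ ⟨i, rfl⟩
      exact mem_algebraicClosure_iff.mpr (hα i)
    exact hVle (b j).2
  have hzK : ∀ j, z j ∈ K := by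
    intro j
    exact mul_mem (inv_mem (natCast_mem K D)) (hbK j)
  have hαz : ∀ i, α i = ∑ j, (m i j : ℂ) * z j := by
    intro i
    rw [← hrepr i]
    apply Finset.sum_congr rfl
    intro j _
    have hmC : ((m i j : ℂ)) = (q i j : ℂ) * (D : ℂ) := by
      have := hm i j
      have h2 := congrArg (fun t : ℚ => (t : ℂ)) this
      push_cast at h2
      exact h2
    rw [hzdef, hmC]
    field_simp
  -- z is linearly independent over ℚ
  have hlin : LinearIndependent ℚ z := by
    have h1 : LinearIndependent ℚ (fun j => (b j : ℂ)) :=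
      b.linearIndependent.map' V.subtype (Submodule.ker_subtype V)
    let f : ℂ →ₗ[ℚ] ℂ :=
      { toFun := fun x => ((D : ℂ))⁻¹ * x
        map_add' := fun x y => mul_add _ x y
        map_smul' := fun r x => by simp [Rat.smul_def]; ring }
    have hker : LinearMap.ker f = ⊥ := by
      rw [LinearMap.ker_eq_bot]
      intro x y hxy
      simpa using mul_left_cancel₀ (inv_ne_zero hDC) hxy
    exact h1.map' f hker
  obtain ⟨s, hcard, hAI⟩ := hSch n z hlin
  have hnoinl : ∀ j, Sum.inl j ∉ s := by
    intro j hj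
    have ht := hAI.transcendental ⟨Sum.inl j, hj⟩
    exact ht (mem_algebraicClosure_iff.mp (hzK j))
  have hseq : s = Finset.univ.map ⟨Sum.inr, Sum.inr_injective⟩ := by
    apply Finset.eq_of_subset_of_card_le
    · intro x hx
      match x with
      | Sum.inl j => exact absurd hx (hnoinl j)
      | Sum.inr j => exact Finset.mem_map_of_mem _ (Finset.mem_univ j)
    · simpa using hcard
  have hexpAI : AlgebraicIndependent ℚ (fun j : Fin n => Complex.exp (z j)) := by
    have hmem : ∀ j : Fin n, Sum.inr j ∈ s := by
      intro j
      rw [hseq]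
      exact Finset.mem_map_of_mem _ (Finset.mem_univ j)
    have hembinj : Function.Injective (fun j : Fin n => (⟨Sum.inr j, hmem j⟩ : {x // x ∈ s})) :=
      fun j j' h => by
        have := congrArg Subtype.val h
        exact Sum.inr_injective this
    exact hAI.comp (fun j : Fin n => (⟨Sum.inr j, hmem j⟩ : {x // x ∈ s})) hembinj
  have hKAI : AlgebraicIndependent K (fun j : Fin n => Complex.exp (z j)) :=
    algIndep_extendQbar _ hexpAI
  -- shift exponents to naturals
  set M : ℕ := ∑ i : Fin k, ∑ j : Fin n, (m i j).natAbs with hMdef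
  have hMle : ∀ i j, (m i j).natAbs ≤ M := by
    intro i j
    calc (m i j).natAbs ≤ ∑ j', (m i j').natAbs :=
          Finset.single_le_sum (f := fun j' => (m i j').natAbs)
            (fun j' _ => Nat.zero_le _) (Finset.mem_univ j)
      _ ≤ M := Finset.single_le_sum (f := fun i' => ∑ j', (m i' j').natAbs)
          (fun i' _ => Nat.zero_le _) (Finset.mem_univ i)
  set e : Fin k → Fin n → ℕ := fun i j => (m i j + M).toNat with hedef
  have he : ∀ i j, ((e i j : ℤ)) = m i j + M := by
    intro i j
    rw [hedef]
    apply Int.toNat_of_nonneg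
    have h1 : -(m i j) ≤ ((m i j).natAbs : ℤ) := by omega
    have h2 : ((m i j).natAbs : ℤ) ≤ (M : ℤ) := by exact_mod_cast hMle i j
    omega
  -- the key product identity
  have hprod : ∀ i, Complex.exp (α i) * ∏ j, Complex.exp (z j) ^ (M : ℕ)
      = ∏ j, Complex.exp (z j) ^ (e i j) := by
    intro i
    have h1 : Complex.exp (α i) = ∏ j, Complex.exp (z j) ^ (m i j) := by
      rw [hαz i, Complex.exp_sum]
      apply Finset.prod_congr rfl
      intro j _
      exact Complex.exp_int_mul (z j) (m i j)
    rw [h1, ← Finset.prod_mul_distrib]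
    apply Finset.prod_congr rfl
    intro j _
    have hne : Complex.exp (z j) ≠ 0 := Complex.exp_ne_zero _
    rw [← zpow_natCast (Complex.exp (z j)) M, ← zpow_natCast (Complex.exp (z j)) (e i j),
      ← zpow_add₀ hne, he i j]
  have hsum2 : ∑ i, c i * ∏ j, Complex.exp (z j) ^ (e i j) = 0 := by
    calc ∑ i, c i * ∏ j, Complex.exp (z j) ^ (e i j)
        = ∑ i, (c i * Complex.exp (α i)) * ∏ j, Complex.exp (z j) ^ (M : ℕ) := by
          apply Finset.sum_congr rfl
          intro i _
          rw [← hprod i]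
          ring
      _ = (∑ i, c i * Complex.exp (α i)) * ∏ j, Complex.exp (z j) ^ (M : ℕ) := by
          rw [Finset.sum_mul]
      _ = 0 := by rw [hsum, zero_mul]
  -- exponent vectors are injective
  have heinj : Function.Injective (fun i => (e i : Fin n → ℕ)) := by
    intro i i' hii
    apply hinj
    rw [hαz i, hαz i']
    apply Finset.sum_congr rfl
    intro j _
    have : e i j = e i' j := congrFun hii j
    have hm' : m i j = m i' j := by
      have h1 := he i j
      have h2 := he i' j
      omega
    rw [hm']
  -- build the polynomial over K
  set d : Fin k → (Fin n →₀ ℕ) := fun i => Finsupp.equivFunOnFinite.symm (e i) with hddef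
  have hdinj : Function.Injective d := fun i i' h =>
    heinj (by simpa [hddef] using congrArg Finsupp.equivFunOnFinite h)
  set P : MvPolynomial (Fin n) K :=
    ∑ i, MvPolynomial.monomial (d i) (⟨c i, mem_algebraicClosure_iff.mpr (hc i)⟩ : K) with hPdef
  have hPaeval : MvPolynomial.aeval (R := K) (fun j => Complex.exp (z j)) P = 0 := by
    rw [hPdef, map_sum]
    rw [← hsum2]
    apply Finset.sum_congr rfl
    intro i _
    rw [MvPolynomial.aeval_monomial]
    congr 1
    rw [Finsupp.prod_fintype _ _ (fun j => pow_zero _)]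
    apply Finset.prod_congr rfl
    intro j _
    congr 1
  have hP0 : P = 0 := hKAI.eq_zero_of_aeval_eq_zero _ hPaeval
  intro i
  have hco := congrArg (MvPolynomial.coeff (d i)) hP0
  rw [hPdef] at hco
  rw [MvPolynomial.coeff_sum] at hco
  rw [Finset.sum_eq_single i] at hco
  · rw [MvPolynomial.coeff_monomial, if_pos rfl, MvPolynomial.coeff_zero] at hco
    exact Subtype.ext_iff.mp hco
  · intro i' _ hi'
    rw [MvPolynomial.coeff_monomial, if_neg (fun h => hi' (hdinj h))]
  · intro h
    exact absurd (Finset.mem_univ i) h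


theorem finitely_many_algebraic_zeros (hSch : SchanuelConjecture)
    (m : ℕ) (hm : 1 ≤ m) (a g : Fin m → Polynomial ℂ)
    (ha : ∀ i k, IsAlgebraic ℚ ((a i).coeff k))
    (hane : ∀ i, a i ≠ 0)
    (hg : ∀ i k, IsAlgebraic ℚ ((g i).coeff k))
    (hgdist : ∀ i j, i ≠ j → g i ≠ g j) :
    {β : ℂ | IsAlgebraic ℚ β ∧
      ∑ i, (a i).eval β * Complex.exp ((g i).eval β) = 0}.Finite := by
  classical
  set i0 : Fin m := ⟨0, hm⟩ with hi0
  have hfin1 : {β : ℂ | (a i0).eval β = 0}.Finite :=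
    Polynomial.finite_setOf_isRoot (hane i0)
  have hfin2 : (⋃ i, ⋃ j, {β : ℂ | i ≠ j ∧ (g i - g j).eval β = 0}).Finite := by
    apply Set.finite_iUnion
    intro i
    apply Set.finite_iUnion
    intro j
    by_cases hij : i = j
    · subst hij
      simp
    · exact (Polynomial.finite_setOf_isRoot (sub_ne_zero.mpr (hgdist i j hij))).subset
        (fun β hβ => hβ.2)
  apply (hfin1.union hfin2).subset
  rintro β ⟨hβalg, hβsum⟩
  by_cases hcol : ∃ i j, i ≠ j ∧ (g i).eval β = (g j).eval β
  · right
    obtain ⟨i, j, hij, heq⟩ := hcol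
    refine Set.mem_iUnion.mpr ⟨i, Set.mem_iUnion.mpr ⟨j, hij, ?_⟩⟩
    rw [Polynomial.eval_sub, sub_eq_zero]
    exact heq
  · left
    push_neg at hcol
    have hzero := lw_zero hSch m (fun i => (g i).eval β) (fun i => (a i).eval β)
      (fun i => eval_isAlgebraic (g i) (hg i) hβalg)
      (fun i => eval_isAlgebraic (a i) (ha i) hβalg)
      (fun i j h => by
        by_contra hne
        exact hcol i j hne h)
      hβsum
    exact hzero i0
end

section
/- Assume Schanuel's conjecture for ℂ. Let a₁,…,aₘ and b₁,…,bₘ be algebraic numbers with the bᵢ pairwise distinct and not all aᵢ equal to zero. If β is a nonzero algebraic number then Σᵢ aᵢ·exp(bᵢ·β) ≠ 0. Consequently the function p(z) = Σᵢ aᵢ e^{bᵢ z} has at most one algebraic zero, namely possibly 0. -/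
set_option synthInstance.maxHeartbeats 1000000
set_option maxHeartbeats 1000000

open Polynomial in
lemma isAlgebraic_of_coeff_mem {F : Type*} [Field F] [Algebra F ℂ] (L : IntermediateField F ℂ)
    (q : Polynomial ℂ) (hq : q ≠ 0) (hc : ∀ n, q.coeff n ∈ L) {x : ℂ} (hx : q.eval x = 0) :
    IsAlgebraic ↥L x := by
  classical
  set q' : Polynomial ↥L := ∑ i ∈ q.support, Polynomial.monomial i (⟨q.coeff i, hc i⟩ : ↥L)
    with hq'
  have hcoeff : ∀ n, ((q'.coeff n : ↥L) : ℂ) = q.coeff n := by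
    intro n
    rw [hq']
    simp only [Polynomial.finset_sum_coeff, Polynomial.coeff_monomial]
    rw [Finset.sum_ite_eq' q.support n _]
    split_ifs with h
    · rfl
    · simp [Polynomial.notMem_support_iff.mp h]
  have hmap : q'.map (algebraMap ↥L ℂ) = q := by
    ext n
    rw [Polynomial.coeff_map]
    exact hcoeff n
  refine ⟨q', fun h0 => hq ?_, ?_⟩
  · rw [← hmap, h0, Polynomial.map_zero]
  · rw [Polynomial.aeval_def, ← Polynomial.eval_map, hmap]; exact hx

lemma isAlgebraic_of_coeff_isAlgebraic (F : Type*) [Field F] [Algebra F ℂ]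
    (q : Polynomial ℂ) (hq : q ≠ 0) (hc : ∀ n, IsAlgebraic F (q.coeff n)) {x : ℂ}
    (hx : q.eval x = 0) : IsAlgebraic F x := by
  have h1 : IsAlgebraic ↥(algebraicClosure F ℂ) x :=
    isAlgebraic_of_coeff_mem _ q hq (fun n => mem_algebraicClosure_iff.mpr (hc n)) hx
  have h2 : IsIntegral ↥(algebraicClosure F ℂ) x := isAlgebraic_iff_isIntegral.mp h1
  haveI : Algebra.IsIntegral F ↥(algebraicClosure F ℂ) :=
    Algebra.isAlgebraic_iff_isIntegral.mp inferInstance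
  exact (isIntegral_trans x h2).isAlgebraic

lemma algebraicIndependent_extend {ι : Type} (t : ι → ℂ)
    (ht : AlgebraicIndependent ℚ t) :
    AlgebraicIndependent ↥(algebraicClosure ℚ ℂ) t := by
  classical
  refine algebraicIndependent_of_finite_type' (RingHom.injective _) ?_
  intro S hS _ i hiS
  have htS : AlgebraicIndependent ℚ (fun s : S => t s) := ht.comp _ Subtype.val_injective
  have hopt : AlgebraicIndependent ℚ (fun o : Option S => o.elim (t i) (fun s : S => t s)) := by
    have hinj : Function.Injective (fun o : Option S => o.elim i Subtype.val) := by
      intro o1 o2 h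
      match o1, o2 with
      | none, none => rfl
      | none, some s => simp only [Option.elim] at h; exact absurd (h ▸ s.2) hiS
      | some s, none => simp only [Option.elim] at h; exact absurd (h ▸ s.2) (by simpa using hiS)
      | some s1, some s2 => simpa [Subtype.ext_iff] using h
    have := ht.comp (fun o : Option S => o.elim i Subtype.val) hinj
    convert this using 1
    funext o
    cases o <;> rfl
  have htrans : Transcendental (Algebra.adjoin ℚ (t '' S)) (t i) := by
    have h2 := (htS.option_iff_transcendental (t i)).mp hopt
    rwa [show Set.range (fun s : S => t s) = t '' S from (Set.image_eq_range t S).symm] at h2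
  intro halg
  apply htrans
  set K := algebraicClosure ℚ ℂ
  set A := Algebra.adjoin ℚ (t '' S)
  letI : Algebra (FractionRing ↥A) ℂ := FractionRing.liftAlgebra _ _
  haveI := FractionRing.isScalarTower_liftAlgebra ↥A ℂ
  rw [IsFractionRing.isAlgebraic_iff ↥A (FractionRing ↥A) ℂ]
  obtain ⟨q0, hq0ne, hq0⟩ := halg
  set q := q0.map (algebraMap ↥(Algebra.adjoin ↥K (t '' S)) ℂ) with hqdef
  have hqne : q ≠ 0 := by
    rw [hqdef]
    exact Polynomial.map_ne_zero_iff (Subtype.val_injective) |>.mpr hq0ne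
  have hqeval : q.eval (t i) = 0 := by
    rw [hqdef, Polynomial.eval_map, ← Polynomial.aeval_def]
    exact hq0
  refine isAlgebraic_of_coeff_isAlgebraic _ q hqne ?_ hqeval
  intro n
  have hmem : q.coeff n ∈ Algebra.adjoin ↥K (t '' S) := by
    rw [hqdef, Polynomial.coeff_map]
    exact (q0.coeff n).2
  refine Algebra.adjoin_induction ?_ ?_ ?_ ?_ hmem
  · intro x hx
    have hxA : x ∈ A := Algebra.subset_adjoin hx
    have : IsAlgebraic ↥A (algebraMap ↥A ℂ (⟨x, hxA⟩ : ↥A)) := isAlgebraic_algebraMap _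
    exact (IsFractionRing.isAlgebraic_iff ↥A (FractionRing ↥A) ℂ).mp this
  · intro r
    have hr : IsAlgebraic ℚ (r : ℂ) := mem_algebraicClosure_iff.mp r.2
    have hrA : IsAlgebraic ↥A (r : ℂ) :=
      hr.extendScalars (algebraMap ℚ ↥A).injective
    exact (IsFractionRing.isAlgebraic_iff ↥A (FractionRing ↥A) ℂ).mp hrA
  · intro x y _ _ hx hy
    rw [isAlgebraic_iff_isIntegral] at *
    exact hx.add hy
  · intro x y _ _ hx hy
    rw [isAlgebraic_iff_isIntegral] at *
    exact hx.mul hy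

lemma exp_algebraicIndependent (hSch : SchanuelConjecture) {n : ℕ} (u : Fin n → ℂ)
    (hli : LinearIndependent ℚ u) (halg : ∀ j, IsAlgebraic ℚ (u j)) :
    AlgebraicIndependent ℚ (fun j => Complex.exp (u j)) := by
  classical
  obtain ⟨s, hcard, hind⟩ := hSch n u hli
  have hs : ∀ x ∈ s, ∃ j, x = Sum.inr j := by
    intro x hx
    match x with
    | Sum.inl i => exact absurd (halg i) (hind.transcendental ⟨Sum.inl i, hx⟩)
    | Sum.inr j => exact ⟨j, rfl⟩
  have hsub : s ⊆ Finset.univ.image Sum.inr := by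
    intro x hx
    obtain ⟨j, rfl⟩ := hs x hx
    simp
  have hcard2 : (Finset.univ.image (Sum.inr : Fin n → Fin n ⊕ Fin n)).card = n := by
    rw [Finset.card_image_of_injective _ Sum.inr_injective, Finset.card_univ, Fintype.card_fin]
  have hseq : s = Finset.univ.image Sum.inr :=
    Finset.eq_of_subset_of_card_le hsub (by omega)
  have hmem : ∀ j : Fin n, (Sum.inr j : Fin n ⊕ Fin n) ∈ s := by
    intro j; rw [hseq]; simp
  have hinj : Function.Injective (fun j : Fin n => (⟨Sum.inr j, hmem j⟩ : s)) := by
    intro j1 j2 h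
    simpa [Subtype.ext_iff] using h
  exact hind.comp (fun j : Fin n => (⟨Sum.inr j, hmem j⟩ : s)) hinj

lemma monomial_relation {N M : ℕ} (t : Fin N → ℂ)
    (ht : AlgebraicIndependent ↥(algebraicClosure ℚ ℂ) t)
    (a : Fin M → ℂ) (ha : ∀ i, IsAlgebraic ℚ (a i))
    (k : Fin M → Fin N → ℕ) (hk : Function.Injective k)
    (h : ∑ i, a i * ∏ j, t j ^ k i j = 0) : ∀ i, a i = 0 := by
  classical
  set K := algebraicClosure ℚ ℂ with hK
  set a' : Fin M → ↥K := fun i => ⟨a i, mem_algebraicClosure_iff.mpr (ha i)⟩ with ha'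
  set p : MvPolynomial (Fin N) ↥K :=
    ∑ i, MvPolynomial.monomial (Finsupp.equivFunOnFinite.symm (k i)) (a' i) with hp
  have hev : MvPolynomial.aeval t p = 0 := by
    rw [hp, map_sum, ← h]
    refine Finset.sum_congr rfl fun i _ => ?_
    rw [MvPolynomial.aeval_monomial]
    congr 1
    rw [Finsupp.prod_fintype]
    · refine Finset.prod_congr rfl fun j _ => by simp
    · intro j; exact pow_zero _
  have hp0 : p = 0 := (algebraicIndependent_iff.mp ht) p hev
  intro i
  have hco := congrArg (MvPolynomial.coeff (Finsupp.equivFunOnFinite.symm (k i))) hp0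
  rw [hp, MvPolynomial.coeff_zero] at hco
  rw [MvPolynomial.coeff_sum] at hco
  rw [Finset.sum_eq_single i] at hco
  · rw [MvPolynomial.coeff_monomial, if_pos rfl] at hco
    simpa [ha', Subtype.ext_iff] using hco
  · intro i' _ hne
    rw [MvPolynomial.coeff_monomial, if_neg]
    intro heq
    exact hne (hk (Finsupp.equivFunOnFinite.symm.injective heq))
  · intro hni; exact absurd (Finset.mem_univ i) hni

lemma isAlgebraicQ.mul {x y : ℂ} (hx : IsAlgebraic ℚ x) (hy : IsAlgebraic ℚ y) :
    IsAlgebraic ℚ (x * y) := by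
  rw [isAlgebraic_iff_isIntegral] at *
  exact hx.mul hy

lemma isAlgebraicQ.add {x y : ℂ} (hx : IsAlgebraic ℚ x) (hy : IsAlgebraic ℚ y) :
    IsAlgebraic ℚ (x + y) := by
  rw [isAlgebraic_iff_isIntegral] at *
  exact hx.add hy

lemma isAlgebraicQ.rat (q : ℚ) : IsAlgebraic ℚ (q : ℂ) := by
  have := isAlgebraic_algebraMap (R := ℚ) (A := ℂ) q
  rwa [show algebraMap ℚ ℂ q = (q : ℂ) from rfl] at this

theorem exp_sum_ne_zero_at_nonzero_algebraic (hSch : SchanuelConjecture)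
    (m : ℕ) (a b : Fin m → ℂ)
    (ha : ∀ i, IsAlgebraic ℚ (a i)) (hb : ∀ i, IsAlgebraic ℚ (b i))
    (hbdist : Function.Injective b) (hane : ∃ i, a i ≠ 0)
    (β : ℂ) (hβ : IsAlgebraic ℚ β) (hβne : β ≠ 0) :
    ∑ i, a i * Complex.exp (b i * β) ≠ 0 := by
  classical
  intro h
  set z : Fin m → ℂ := fun i => b i * β with hzdef
  have hzalg : ∀ i, IsAlgebraic ℚ (z i) := fun i => isAlgebraicQ.mul (hb i) hβ
  have hzinj : Function.Injective z := fun i j hij => hbdist (mul_right_cancel₀ hβne hij)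
  set V := Submodule.span ℚ (Set.range z) with hV
  have hVfd : FiniteDimensional ℚ V := FiniteDimensional.span_of_finite ℚ (Set.finite_range z)
  have hValg : ∀ x ∈ V, IsAlgebraic ℚ x := by
    intro x hx
    refine Submodule.span_induction ?_ ?_ ?_ ?_ hx
    · rintro y ⟨i, rfl⟩; exact hzalg i
    · exact isAlgebraic_zero
    · intro y1 y2 _ _ h1 h2; exact isAlgebraicQ.add h1 h2
    · intro q y _ hy
      rw [Rat.smul_def]
      exact isAlgebraicQ.mul (isAlgebraicQ.rat q) hy
  set N := Module.finrank ℚ V with hN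
  set W : Module.Basis (Fin N) ℚ V := Module.finBasis ℚ V with hW
  set w : Fin N → ℂ := fun j => (W j : ℂ) with hwdef
  have hw_li : LinearIndependent ℚ w :=
    W.linearIndependent.map' V.subtype (Submodule.ker_subtype V)
  -- coordinates
  have hzmem : ∀ i, z i ∈ V := fun i => Submodule.subset_span ⟨i, rfl⟩
  set c : Fin m → Fin N → ℚ := fun i j => W.repr ⟨z i, hzmem i⟩ j with hc
  have hzc : ∀ i, z i = ∑ j, (c i j : ℂ) * w j := by
    intro i
    have hsum := W.sum_repr ⟨z i, hzmem i⟩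
    have := congrArg (V.subtype) hsum
    rw [map_sum] at this
    simp only [map_smul] at this
    rw [show V.subtype ⟨z i, hzmem i⟩ = z i from rfl] at this
    rw [← this]
    refine Finset.sum_congr rfl fun j _ => ?_
    rw [Rat.smul_def]
    rfl
  -- common denominator
  set D : ℕ := ∏ i, ∏ j, (c i j).den with hD
  have hDpos : 0 < D := Finset.prod_pos fun i _ => Finset.prod_pos fun j _ => (c i j).pos
  have hden_dvd : ∀ i j, (c i j).den ∣ D := by
    intro i j
    have h1 : (c i j).den ∣ ∏ j', (c i j').den :=
      Finset.dvd_prod_of_mem (fun j' => (c i j').den) (Finset.mem_univ j)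
    have h2 : (∏ j', (c i j').den) ∣ D :=
      Finset.dvd_prod_of_mem (fun i' => ∏ j', (c i' j').den) (Finset.mem_univ i)
    exact h1.trans h2
  set nij : Fin m → Fin N → ℤ := fun i j => (c i j).num * (D / (c i j).den : ℕ) with hnij
  have hcD : ∀ i j, ((nij i j : ℚ)) = c i j * D := by
    intro i j
    obtain ⟨e, he⟩ := hden_dvd i j
    have h1 : (D / (c i j).den : ℕ) = e := by
      rw [he]; exact Nat.mul_div_cancel_left e (c i j).pos
    have hdenne : ((c i j).den : ℚ) ≠ 0 := Nat.cast_ne_zero.mpr (c i j).den_nz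
    have h2 : ((c i j).num : ℚ) = c i j * ((c i j).den : ℚ) :=
      (div_eq_iff hdenne).mp (Rat.num_div_den (c i j))
    simp only [hnij, h1]
    rw [he]
    push_cast
    rw [h2]
    ring
  have h' : ∑ i, a i * Complex.exp (z i) = 0 := h
  have hDC : (D:ℂ) ≠ 0 := Nat.cast_ne_zero.mpr hDpos.ne'
  set u : Fin N → ℂ := fun j => (D:ℂ)⁻¹ * w j with hu
  have hu_li : LinearIndependent ℚ u := by
    have hker : LinearMap.ker (LinearMap.mulLeft ℚ ((D:ℂ)⁻¹)) = ⊥ := by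
      rw [LinearMap.ker_eq_bot]
      exact mul_right_injective₀ (inv_ne_zero hDC)
    exact hw_li.map' (LinearMap.mulLeft ℚ ((D:ℂ)⁻¹)) hker
  have hwalg : ∀ j, IsAlgebraic ℚ (w j) := fun j => hValg _ (W j).2
  have hualg : ∀ j, IsAlgebraic ℚ (u j) := by
    intro j
    have hDinv : IsAlgebraic ℚ ((D:ℂ)⁻¹) := by
      have h5 := isAlgebraicQ.rat ((D:ℚ)⁻¹)
      rwa [show (((D:ℚ)⁻¹ : ℚ) : ℂ) = (D:ℂ)⁻¹ from by push_cast; ring] at h5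
    exact isAlgebraicQ.mul hDinv (hwalg j)
  have hz_u : ∀ i, z i = ∑ j, (nij i j : ℂ) * u j := by
    intro i
    rw [hzc i]
    refine Finset.sum_congr rfl fun j _ => ?_
    have hnc : ((nij i j : ℤ) : ℂ) = (c i j : ℂ) * (D:ℂ) := by
      have h3 := congrArg (fun q : ℚ => (q : ℂ)) (hcD i j)
      push_cast at h3
      exact_mod_cast h3
    rw [hu, hnc]
    field_simp
  set t : Fin N → ℂ := fun j => Complex.exp (u j) with htdef
  have htne : ∀ j, t j ≠ 0 := fun j => Complex.exp_ne_zero _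
  have hexpz : ∀ i, Complex.exp (z i) = ∏ j, t j ^ (nij i j) := by
    intro i
    rw [hz_u i, Complex.exp_sum]
    exact Finset.prod_congr rfl fun j _ => Complex.exp_int_mul (u j) (nij i j)
  have htQ : AlgebraicIndependent ℚ t := exp_algebraicIndependent hSch u hu_li hualg
  have htK : AlgebraicIndependent ↥(algebraicClosure ℚ ℂ) t := algebraicIndependent_extend t htQ
  set B : ℤ := ∑ i, ∑ j, |nij i j| with hB
  have hBnn : ∀ i j, 0 ≤ nij i j + B := by
    intro i j
    have h1 : |nij i j| ≤ B := by
      rw [hB]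
      calc |nij i j| ≤ ∑ j', |nij i j'| :=
            Finset.single_le_sum (f := fun j' => |nij i j'|)
              (fun j' _ => abs_nonneg _) (Finset.mem_univ j)
        _ ≤ ∑ i', ∑ j', |nij i' j'| :=
            Finset.single_le_sum (f := fun i' => ∑ j', |nij i' j'|)
              (fun i' _ => Finset.sum_nonneg fun j' _ => abs_nonneg _) (Finset.mem_univ i)
    have h2 := neg_abs_le (nij i j)
    omega
  set k : Fin m → Fin N → ℕ := fun i j => (nij i j + B).toNat with hkdef
  have hkc : ∀ i j, (k i j : ℤ) = nij i j + B := fun i j => Int.toNat_of_nonneg (hBnn i j)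
  have hk_inj : Function.Injective k := by
    intro i1 i2 hkk
    apply hzinj
    rw [hz_u i1, hz_u i2]
    refine Finset.sum_congr rfl fun j _ => ?_
    have hn : nij i1 j = nij i2 j := by
      have h4 : (k i1 j : ℤ) = (k i2 j : ℤ) := by rw [hkk]
      rw [hkc i1 j, hkc i2 j] at h4
      omega
    rw [hn]
  have hrel : ∑ i, a i * ∏ j, t j ^ k i j = 0 := by
    have hterm : ∀ i, a i * ∏ j, t j ^ k i j = (a i * Complex.exp (z i)) * ∏ j, t j ^ B := by
      intro i
      rw [hexpz i, mul_assoc, ← Finset.prod_mul_distrib]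
      congr 1
      refine Finset.prod_congr rfl fun j _ => ?_
      rw [← zpow_natCast (t j) (k i j), hkc i j, zpow_add₀ (htne j)]
    calc ∑ i, a i * ∏ j, t j ^ k i j = (∑ i, a i * Complex.exp (z i)) * ∏ j, t j ^ B := by
          rw [Finset.sum_mul]; exact Finset.sum_congr rfl fun i _ => hterm i
      _ = 0 := by rw [h', zero_mul]
  obtain ⟨i0, hi0⟩ := hane
  exact hi0 (monomial_relation t htK a ha k hk_inj hrel i0)
end

section
/- Let a₁,…,aₘ be algebraic numbers, not all zero, and g₁,…,gₘ pairwise distinct polynomials in ℚ̄[x]. If β is an algebraic number such that exp(g₁(β)),…,exp(gₘ(β)) generate a field of transcendence degree over ℚ equal to the ℚ-linear dimension of the span of g₁(β),…,gₘ(β), and Σᵢ aᵢ exp(gᵢ(β)) = 0, then gᵢ(β) = gⱼ(β) for some i ≠ j. -/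
open Polynomial in
lemma H1a {F : Type*} [Field F] [Algebra F ℂ] {T : Subalgebra F ℂ} {z : ℂ}
    (h : IsAlgebraic (↥T) z) :
    ∃ p : ℂ[X], p ≠ 0 ∧ (∀ n, p.coeff n ∈ T) ∧ p.eval z = 0 := by
  obtain ⟨p, hp0, hpz⟩ := h
  refine ⟨p.map T.val, ?_, ?_, ?_⟩
  · simpa using (Polynomial.map_ne_zero_iff (f := (T.val : ↥T →+* ℂ)) Subtype.val_injective).2 hp0
  · intro n; rw [Polynomial.coeff_map]; exact (p.coeff n).2
  · rw [← hpz, Polynomial.aeval_def, Polynomial.eval_map]; rfl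

open Polynomial in
lemma H1b {F : Type*} [Field F] [Algebra F ℂ] {T : Subalgebra F ℂ} {z : ℂ}
    (p : ℂ[X]) (hp0 : p ≠ 0) (hmem : ∀ n, p.coeff n ∈ T) (hpz : p.eval z = 0) :
    IsAlgebraic (↥T) z := by
  classical
  refine ⟨∑ n ∈ p.support, Polynomial.monomial n (⟨p.coeff n, hmem n⟩ : ↥T), ?_, ?_⟩
  · intro h0
    have hex : ¬ ∀ n, p.coeff n = 0 := fun hall => hp0 (Polynomial.ext (by simpa using hall))
    obtain ⟨n, hn⟩ := not_forall.mp hex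
    have : ((∑ k ∈ p.support, Polynomial.monomial k (⟨p.coeff k, hmem k⟩ : ↥T)).coeff n) = 0 := by
      rw [h0]; simp
    rw [Polynomial.finset_sum_coeff] at this
    simp only [Polynomial.coeff_monomial] at this
    rw [Finset.sum_ite_eq' p.support n] at this
    simp [Polynomial.mem_support_iff.2 hn] at this
    exact hn (congrArg Subtype.val this)
  · rw [← hpz]
    rw [map_sum]
    conv_rhs => rw [← Polynomial.sum_monomial_eq p]
    rw [Polynomial.sum, Polynomial.eval_finset_sum]
    refine Finset.sum_congr rfl fun n _ => ?_
    rw [Polynomial.aeval_monomial, Polynomial.eval_monomial]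
    rfl

lemma adjoin_sub_subfield {F : Type*} [Field F] [Algebra F ℂ] (S : Set ℂ) (T : Subfield ℂ)
    (hF : ∀ c : F, algebraMap F ℂ c ∈ T) (hS : S ⊆ ↑T) :
    (Algebra.adjoin F S : Set ℂ) ⊆ ↑T := by
  intro z hz
  have : z ∈ Subring.closure (Set.range (algebraMap F ℂ) ∪ S) :=
    Algebra.mem_adjoin_iff.mp hz
  have hle : Subring.closure (Set.range (algebraMap F ℂ) ∪ S) ≤ T.toSubring := by
    apply Subring.closure_le.mpr
    rintro x (⟨c, rfl⟩ | hx)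
    · exact hF c
    · exact hS hx
  exact hle this

lemma lemB {F ι : Type*} [Field F] [Algebra F ℂ] {x : ι → ℂ}
    (hx : AlgebraicIndependent F x) (t : Set ι) {i : ι} (hi : i ∉ t) :
    Transcendental (↥(Algebra.adjoin F (x '' t))) (x i) := by
  classical
  set f : Option t → ι := fun o => o.elim i Subtype.val with hf
  have hfinj : Function.Injective f := by
    rintro (_ | ⟨a, ha⟩) (_ | ⟨b, hb⟩) h
    · rfl
    · exact absurd hb (by simp only [hf, Option.elim] at h; rwa [h] at hi)
    · exact absurd ha (by simp only [hf, Option.elim] at h; rwa [← h] at hi)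
    · simp only [hf, Option.elim] at h; simp [Subtype.ext_iff, h]
  have hof : AlgebraicIndependent F (x ∘ f) := hx.comp f hfinj
  have hx' : AlgebraicIndependent F (fun j : t => x j) := hx.comp Subtype.val Subtype.val_injective
  have heq : (x ∘ f) = fun o : Option t => o.elim (x i) (fun j : t => x j) := by
    funext o; cases o <;> rfl
  rw [heq] at hof
  have := (hx'.option_iff_transcendental (x i)).mp hof
  rwa [show Set.range (fun j : t => x j) = x '' t by rw [← Set.image_eq_range]] at this

lemma lemD {F : Type*} [Field F] [Algebra F ℂ] (S : Set ℂ) {z : ℂ}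
    (h : IsAlgebraic (↥(IntermediateField.adjoin F S)) z) :
    IsAlgebraic (↥(Algebra.adjoin F S)) z := by
  classical
  have h' : IsAlgebraic (↥(IntermediateField.adjoin F S).toSubalgebra) z := h
  have hex : ∃ p : Polynomial ℂ, p ≠ 0 ∧ (∀ n, p.coeff n ∈ IntermediateField.adjoin F S) ∧
      p.eval z = 0 := by
    obtain ⟨q, hq0, hqz⟩ := h'
    refine ⟨q.map (IntermediateField.adjoin F S).toSubalgebra.val, ?_, ?_, ?_⟩
    · simpa using (Polynomial.map_ne_zero_iff
        (f := ((IntermediateField.adjoin F S).toSubalgebra.val : _ →+* ℂ))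
        Subtype.val_injective).2 hq0
    · intro n; rw [Polynomial.coeff_map]
      exact (q.coeff n).2
    · rw [← hqz, Polynomial.aeval_def, Polynomial.eval_map]; rfl
  obtain ⟨p, hp0, hmem, hpz⟩ := hex
  -- each coefficient is a ratio of elements of the ring adjoin
  have hfrac : ∀ n : ℕ, ∃ r s : ℂ, r ∈ Algebra.adjoin F S ∧ s ∈ Algebra.adjoin F S ∧
      s ≠ 0 ∧ p.coeff n = r / s := by
    intro n
    have hc : p.coeff n ∈ IntermediateField.adjoin F S := hmem n
    rw [IntermediateField.mem_adjoin_iff] at hc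
    obtain ⟨r', s', hrs⟩ := hc
    have hrmem : (MvPolynomial.aeval (Subtype.val : S → ℂ)) r' ∈ Algebra.adjoin F S := by
      have := Algebra.adjoin_range_eq_range_aeval F (Subtype.val : S → ℂ)
      rw [Subtype.range_coe] at this
      rw [this]
      exact ⟨r', rfl⟩
    have hsmem : (MvPolynomial.aeval (Subtype.val : S → ℂ)) s' ∈ Algebra.adjoin F S := by
      have := Algebra.adjoin_range_eq_range_aeval F (Subtype.val : S → ℂ)
      rw [Subtype.range_coe] at this
      rw [this]
      exact ⟨s', rfl⟩
    by_cases hs0 : (MvPolynomial.aeval (Subtype.val : S → ℂ)) s' = 0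
    · refine ⟨0, 1, Subalgebra.zero_mem _, Subalgebra.one_mem _, one_ne_zero, ?_⟩
      rw [hrs, hs0, div_zero, zero_div]
    · exact ⟨_, _, hrmem, hsmem, hs0, hrs⟩
  choose num den hnum hden hden0 hcoeff using hfrac
  set d : ℂ := ∏ n ∈ p.support, den n with hd
  have hdR : d ∈ Algebra.adjoin F S := Subalgebra.prod_mem _ fun n _ => hden n
  have hd0 : d ≠ 0 := Finset.prod_ne_zero_iff.mpr fun n _ => hden0 n
  apply H1b (Polynomial.C d * p)
  · exact mul_ne_zero (Polynomial.C_ne_zero.mpr hd0) hp0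
  · intro n
    rw [Polynomial.coeff_C_mul]
    by_cases hn : n ∈ p.support
    · rw [hcoeff n, hd, ← Finset.mul_prod_erase _ _ hn]
      have : den n * (∏ k ∈ p.support.erase n, den k) * (num n / den n)
          = num n * ∏ k ∈ p.support.erase n, den k := by
        field_simp [hden0 n]
      rw [this]
      exact Subalgebra.mul_mem _ (hnum n) (Subalgebra.prod_mem _ fun k _ => hden k)
    · rw [Polynomial.notMem_support_iff.mp hn, mul_zero]
      exact Subalgebra.zero_mem _
  · rw [Polynomial.eval_mul, hpz, mul_zero]

open Polynomial in
lemma lemL2 {ι : Type*} {x : ι → ℂ} {N : ℕ} (hN : N ≠ 0)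
    (h : AlgebraicIndependent ℚ fun i => x i ^ N) : AlgebraicIndependent ℚ x := by
  classical
  apply algebraicIndependent_of_finite_type' (algebraMap ℚ ℂ).injective
  intro t ht _ i hi
  by_contra htr
  rw [Transcendental, not_not] at htr
  set y : ι → ℂ := fun i => x i ^ N with hy
  have T1 : Transcendental (↥(Algebra.adjoin ℚ (y '' t))) (y i) := lemB h t hi
  apply T1
  set Fy : IntermediateField ℚ ℂ := IntermediateField.adjoin ℚ (y '' t) with hFy
  set Fx : IntermediateField (↥Fy) ℂ := IntermediateField.adjoin (↥Fy) (x '' t) with hFx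
  -- Step A
  have stepA : IsAlgebraic (↥Fx) (x i) := by
    obtain ⟨p, hp0, hmem, hpz⟩ := H1a htr
    have hsub : (Algebra.adjoin ℚ (x '' t) : Set ℂ) ⊆ ↑Fx.toSubfield := by
      apply adjoin_sub_subfield
      · intro c
        have : algebraMap ℚ ℂ c = (c : ℂ) := by simp
        rw [this]
        exact SubfieldClass.ratCast_mem _ c
      · exact IntermediateField.subset_adjoin _ _
    exact H1b (T := Fx.toSubalgebra) p hp0 (fun n => hsub (hmem n)) hpz
  -- Step B
  have stepB : IsIntegral (↥Fx) (y i) := by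
    rw [isAlgebraic_iff_isIntegral] at stepA
    exact stepA.pow N
  -- Step C
  have stepC : Algebra.IsAlgebraic (↥Fy) (↥Fx) := by
    apply IntermediateField.isAlgebraic_adjoin
    rintro _ ⟨j, hj, rfl⟩
    have hmem : y j ∈ Fy := IntermediateField.subset_adjoin _ _ (Set.mem_image_of_mem y hj)
    refine ⟨X ^ N - C (⟨y j, hmem⟩ : ↥Fy),
      Polynomial.monic_X_pow_sub_C _ hN, ?_⟩
    rw [eval₂_sub, eval₂_pow, eval₂_X, eval₂_C]
    have heq : (algebraMap (↥Fy) ℂ) (⟨y j, hmem⟩ : ↥Fy) = y j := rfl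
    rw [heq, hy]
    ring
  haveI : Algebra.IsIntegral (↥Fy) (↥Fx) := Algebra.isAlgebraic_iff_isIntegral.mp stepC
  -- Step D
  have stepD : IsIntegral (↥Fy) (y i) := isIntegral_trans (y i) stepB
  -- Step E + F
  exact lemD _ stepD.isAlgebraic

lemma lemL1 {ι : Type*} (K : IntermediateField ℚ ℂ) (halg : ∀ z ∈ K, IsAlgebraic ℚ z)
    {x : ι → ℂ} (hx : AlgebraicIndependent ℚ x) : AlgebraicIndependent (↥K) x := by
  classical
  apply algebraicIndependent_of_finite_type' (algebraMap (↥K) ℂ).injective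
  intro t ht _ i hi
  by_contra htr
  rw [Transcendental, not_not] at htr
  have T1 : Transcendental (↥(Algebra.adjoin ℚ (x '' t))) (x i) := lemB hx t hi
  apply T1
  set Fx : IntermediateField ℚ ℂ := IntermediateField.adjoin ℚ (x '' t) with hFx
  set FKx : IntermediateField (↥Fx) ℂ := IntermediateField.adjoin (↥Fx) (↑K : Set ℂ) with hFKx
  have hFxsub : ∀ w ∈ Fx, w ∈ FKx := by
    intro w hw
    exact FKx.algebraMap_mem (⟨w, hw⟩ : ↥Fx)
  have stepA : IsAlgebraic (↥FKx) (x i) := by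
    obtain ⟨p, hp0, hmem, hpz⟩ := H1a htr
    have hsub : (Algebra.adjoin (↥K) (x '' t) : Set ℂ) ⊆ ↑FKx.toSubfield := by
      apply adjoin_sub_subfield
      · intro c
        exact IntermediateField.subset_adjoin _ _ c.2
      · intro w hw
        exact hFxsub w (IntermediateField.subset_adjoin _ _ hw)
    exact H1b (T := FKx.toSubalgebra) p hp0 (fun n => hsub (hmem n)) hpz
  have stepC : Algebra.IsAlgebraic (↥Fx) (↥FKx) := by
    apply IntermediateField.isAlgebraic_adjoin
    intro w hw
    rw [← isAlgebraic_iff_isIntegral]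
    exact (halg w hw).extendScalars (algebraMap ℚ (↥Fx)).injective
  haveI : Algebra.IsIntegral (↥Fx) (↥FKx) := Algebra.isAlgebraic_iff_isIntegral.mp stepC
  have stepD : IsIntegral (↥Fx) (x i) :=
    isIntegral_trans (x i) (isAlgebraic_iff_isIntegral.mp stepA)
  exact lemD _ stepD.isAlgebraic

lemma ratint (q : ℚ) (D : ℕ) (h : q.den ∣ D) : ∃ z : ℤ, (z : ℚ) = q * D := by
  obtain ⟨k, hk⟩ := h
  refine ⟨q.num * k, ?_⟩
  have hden : (q.den : ℚ) ≠ 0 := Nat.cast_ne_zero.mpr q.den_nz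
  have hnum : (q.num : ℚ) = q * q.den := by
    exact_mod_cast (Rat.mul_den_eq_num q).symm
  push_cast
  rw [hk, hnum]
  push_cast
  ring

lemma lemLI {ι : Type*} [Fintype ι] {v : ι → ℂ}
    (h : AlgebraicIndependent ℚ fun i => Complex.exp (v i)) : LinearIndependent ℚ v := by
  classical
  rw [Fintype.linearIndependent_iff]
  intro c hsum
  set E : ι → ℂ := fun i => Complex.exp (v i) with hE
  set d : ℕ := ∏ i, (c i).den with hd
  have hd0 : d ≠ 0 := Finset.prod_ne_zero_iff.mpr fun i _ => (c i).den_nz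
  have hz : ∀ i, ∃ z : ℤ, (z : ℚ) = c i * d := fun i =>
    ratint _ _ (Finset.dvd_prod_of_mem _ (Finset.mem_univ i))
  choose z hzc using hz
  -- sum with integer coefficients
  have hsum2 : (∑ i, (z i : ℂ) * v i) = 0 := by
    have : ∑ i, (z i : ℂ) * v i = (d : ℂ) * ∑ i, c i • v i := by
      rw [Finset.mul_sum]
      refine Finset.sum_congr rfl fun i _ => ?_
      have : ((z i : ℚ) : ℂ) = ((c i * d : ℚ) : ℂ) := congrArg Rat.cast (hzc i)
      push_cast at this
      rw [this, Rat.smul_def]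
      push_cast
      ring
    rw [this, hsum, mul_zero]
  have hprod : (∏ i, E i ^ (z i)) = 1 := by
    have := congrArg Complex.exp hsum2
    rw [Complex.exp_sum, Complex.exp_zero] at this
    rw [← this]
    refine Finset.prod_congr rfl fun i _ => ?_
    rw [Complex.exp_int_mul]
  have hkey : (∏ i, E i ^ ((z i).toNat)) = ∏ i, E i ^ ((-z i).toNat) := by
    have hz0 : ∀ i, E i ≠ 0 := fun i => Complex.exp_ne_zero _
    have : ∀ i, E i ^ (((z i).toNat : ℤ)) = E i ^ (z i) * E i ^ (((-z i).toNat : ℤ)) := by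
      intro i
      rw [← zpow_add₀ (hz0 i)]
      congr 1
      have := Int.toNat_sub_toNat_neg (z i)
      omega
    calc (∏ i, E i ^ ((z i).toNat)) = ∏ i, E i ^ (((z i).toNat : ℤ)) := by
          refine Finset.prod_congr rfl fun i _ => (zpow_natCast _ _).symm
      _ = ∏ i, (E i ^ (z i) * E i ^ (((-z i).toNat : ℤ))) :=
          Finset.prod_congr rfl fun i _ => this i
      _ = (∏ i, E i ^ (z i)) * ∏ i, E i ^ (((-z i).toNat : ℤ)) := Finset.prod_mul_distrib
      _ = ∏ i, E i ^ (((-z i).toNat : ℤ)) := by rw [hprod, one_mul]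
      _ = ∏ i, E i ^ ((-z i).toNat) := Finset.prod_congr rfl fun i _ => zpow_natCast _ _
  -- build polynomial relation
  set dp : ι →₀ ℕ := Finsupp.equivFunOnFinite.symm (fun i => (z i).toNat) with hdp
  set dm : ι →₀ ℕ := Finsupp.equivFunOnFinite.symm (fun i => (-z i).toNat) with hdm
  set P : MvPolynomial ι ℚ := MvPolynomial.monomial dp 1 - MvPolynomial.monomial dm 1 with hP
  have haev : ∀ (dd : ι →₀ ℕ), MvPolynomial.aeval E (MvPolynomial.monomial dd (1:ℚ))
      = ∏ i, E i ^ (dd i) := by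
    intro dd
    rw [MvPolynomial.aeval_monomial, map_one, one_mul]
    exact Finsupp.prod_fintype _ _ (fun i => pow_zero _)
  have hPz : MvPolynomial.aeval E P = 0 := by
    rw [hP, map_sub, haev, haev]
    simp only [hdp, hdm, Finsupp.coe_equivFunOnFinite_symm]
    rw [hkey, sub_self]
  have hP0 : P = 0 := algebraicIndependent_iff.mp h P hPz
  have hdd : dp = dm := by
    have h1 : MvPolynomial.monomial dp (1:ℚ) = MvPolynomial.monomial dm 1 := by
      rw [← sub_eq_zero]; exact hP0
    have h2 := congrArg (MvPolynomial.coeff dp) h1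
    rw [MvPolynomial.coeff_monomial, MvPolynomial.coeff_monomial, if_pos rfl] at h2
    by_contra hne
    rw [if_neg (fun hh => hne (hh.symm))] at h2
    exact one_ne_zero h2
  have hzz : ∀ i, z i = 0 := by
    intro i
    have := congrFun (congrArg (fun f : ι →₀ ℕ => (f : ι → ℕ)) hdd) i
    simp only [hdp, hdm, Finsupp.coe_equivFunOnFinite_symm] at this
    omega
  intro i
  have : (c i) * d = 0 := by rw [← hzc i, hzz i]; simp
  rcases mul_eq_zero.mp this with h' | h'
  · exact h'
  · exact absurd h' (by exact_mod_cast hd0)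

theorem unconditional_collapsing (m : ℕ) (a : Fin m → ℂ)
    (ha : ∀ i, IsAlgebraic ℚ (a i)) (hane : ∃ i, a i ≠ 0)
    (g : Fin m → Polynomial ℂ) (hg : ∀ i k, IsAlgebraic ℚ ((g i).coeff k))
    (hgdist : ∀ i j, i ≠ j → g i ≠ g j)
    (β : ℂ) (hβ : IsAlgebraic ℚ β)
    (htd_le : ∀ s : Finset (Fin m),
      AlgebraicIndependent ℚ (fun i : s => Complex.exp ((g i).eval β)) →
      s.card ≤ Module.finrank ℚ (Submodule.span ℚ (Set.range fun i => (g i).eval β)))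
    (htd_ge : ∃ s : Finset (Fin m),
      s.card = Module.finrank ℚ (Submodule.span ℚ (Set.range fun i => (g i).eval β)) ∧
      AlgebraicIndependent ℚ (fun i : s => Complex.exp ((g i).eval β)))
    (hzero : ∑ i, a i * Complex.exp ((g i).eval β) = 0) :
    ∃ i j, i ≠ j ∧ (g i).eval β = (g j).eval β := by
  classical
  set v : Fin m → ℂ := fun i => (g i).eval β with hv
  by_contra hcon
  push_neg at hcon
  have hvinj : Function.Injective v := fun i j hij => by
    by_contra hne; exact hcon i j hne hij
  obtain ⟨i₀, ha0⟩ := hane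
  obtain ⟨s, hscard, hsind⟩ := htd_ge
  set V : Submodule ℚ ℂ := Submodule.span ℚ (Set.range fun i => (g i).eval β) with hV
  have hmemV : ∀ j, v j ∈ V := fun j => Submodule.subset_span ⟨j, rfl⟩
  rcases Finset.eq_empty_or_nonempty s with hsE | hsne
  · -- degenerate case : all v j = 0
    rw [hsE, Finset.card_empty] at hscard
    haveI : Module.Finite ℚ V := FiniteDimensional.span_of_finite ℚ (Set.finite_range _)
    have hVbot : V = ⊥ := Submodule.finrank_eq_zero.mp hscard.symm
    have hv0 : ∀ j, v j = 0 := fun j => by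
      have := hmemV j
      rw [hVbot] at this
      simpa using this
    rcases lt_or_ge m 2 with hm | hm
    · have hpos := i₀.2
      have hm1 : m = 1 := by omega
      subst hm1
      have hsum1 : ∑ j : Fin 1, a j * Complex.exp (v j) = a 0 := by
        rw [Fin.sum_univ_one, hv0 0, Complex.exp_zero, mul_one]
      have h0 : (0 : Fin 1) = i₀ := Subsingleton.elim _ _
      rw [show (∑ i, a i * Complex.exp ((g i).eval β)) = ∑ j : Fin 1, a j * Complex.exp (v j) from rfl,
        hsum1, h0] at hzero
      exact ha0 hzero
    · have h01 : v ⟨0, by omega⟩ = v ⟨1, by omega⟩ := by rw [hv0, hv0]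
      have := hvinj h01
      simp [Fin.ext_iff] at this
  · -- main case
    haveI hne : Nonempty ↥s := ⟨⟨hsne.choose, hsne.choose_spec⟩⟩
    have hli : LinearIndependent ℚ (fun i : ↥s => v ↑i) := lemLI hsind
    set v' : ↥s → ↥V := fun i => ⟨v ↑i, hmemV ↑i⟩ with hv'
    have hli' : LinearIndependent ℚ v' := by
      apply LinearIndependent.of_comp V.subtype
      exact hli
    have hcard : Fintype.card ↥s = Module.finrank ℚ ↥V := by
      rw [Fintype.card_coe]; exact hscard
    set b : Module.Basis ↥s ℚ ↥V := basisOfLinearIndependentOfCardEqFinrank hli' hcard with hb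
    have hbv : ∀ i : ↥s, b i = v' i := fun i =>
      congrFun (coe_basisOfLinearIndependentOfCardEqFinrank hli' hcard) i
    set c : Fin m → (↥s →₀ ℚ) := fun j => b.repr ⟨v j, hmemV j⟩ with hc
    have hrepr : ∀ j, v j = ∑ i : ↥s, (c j i : ℚ) • v ↑i := by
      intro j
      have h1 := b.sum_repr ⟨v j, hmemV j⟩
      have h2 := congrArg (Subtype.val : ↥V → ℂ) h1
      calc v j = ((⟨v j, hmemV j⟩ : ↥V) : ℂ) := rfl
        _ = ((∑ i : ↥s, b.repr ⟨v j, hmemV j⟩ i • b i : ↥V) : ℂ) := by rw [h2]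
        _ = ∑ i : ↥s, (c j i : ℚ) • v ↑i := by
            rw [Submodule.coe_sum]
            refine Finset.sum_congr rfl fun i _ => ?_
            rw [SetLike.val_smul, hbv i]
    have hcinj : Function.Injective c := by
      intro j j' hcc
      have := b.repr.injective hcc
      have := congrArg (Subtype.val : ↥V → ℂ) this
      exact hvinj this
    set N : ℕ := ∏ j, ∏ i : ↥s, (c j i).den with hN
    have hN0 : N ≠ 0 := Finset.prod_ne_zero_iff.mpr fun j _ =>
      Finset.prod_ne_zero_iff.mpr fun i _ => (c j i).den_nz
    have hNC : (N : ℂ) ≠ 0 := Nat.cast_ne_zero.mpr hN0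
    have hNQ : (N : ℚ) ≠ 0 := Nat.cast_ne_zero.mpr hN0
    have hdvd : ∀ j (i : ↥s), (c j i).den ∣ N := fun j i =>
      dvd_trans (Finset.dvd_prod_of_mem (fun i' : ↥s => (c j i').den) (Finset.mem_univ i))
        (Finset.dvd_prod_of_mem (fun j' => ∏ i' : ↥s, (c j' i').den) (Finset.mem_univ j))
    have hzex : ∀ j (i : ↥s), ∃ z : ℤ, (z : ℚ) = c j i * N := fun j i => ratint _ _ (hdvd j i)
    choose e he using hzex
    set w : ↥s → ℂ := fun i => v ↑i / N with hw
    set u : ↥s → ℂ := fun i => Complex.exp (w i) with hu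
    have hupow : (fun i : ↥s => u i ^ N) = fun i : ↥s => Complex.exp ((g ↑i).eval β) := by
      funext i
      rw [hu]
      show Complex.exp (w i) ^ N = Complex.exp (v ↑i)
      rw [← Complex.exp_nat_mul, hw]
      congr 1
      field_simp
    have huind : AlgebraicIndependent ℚ u := lemL2 hN0 (by rw [hupow]; exact hsind)
    set K : IntermediateField ℚ ℂ := IntermediateField.adjoin ℚ (Set.range a) with hK
    have halgK : ∀ z ∈ K, IsAlgebraic ℚ z := by
      intro z hz
      haveI : Algebra.IsAlgebraic ℚ ↥K := by
        apply IntermediateField.isAlgebraic_adjoin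
        rintro w' ⟨i, rfl⟩
        exact (ha i).isIntegral
      have h1 : IsAlgebraic ℚ (⟨z, hz⟩ : ↥K) := Algebra.IsAlgebraic.isAlgebraic _
      exact h1.algHom K.val
    have huK : AlgebraicIndependent (↥K) u := lemL1 K halgK huind
    -- exponential identity
    have hu0 : ∀ i : ↥s, u i ≠ 0 := fun i => Complex.exp_ne_zero _
    have hEj : ∀ j, Complex.exp (v j) = ∏ i : ↥s, u i ^ (e j i) := by
      intro j
      have h1 : v j = ∑ i : ↥s, (e j i : ℂ) * w i := by
        rw [hrepr j]
        refine Finset.sum_congr rfl fun i _ => ?_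
        have hcast : ((e j i : ℚ) : ℂ) = ((c j i * N : ℚ) : ℂ) := congrArg Rat.cast (he j i)
        push_cast at hcast
        rw [hcast, hw, Rat.smul_def]
        field_simp
      rw [h1, Complex.exp_sum]
      exact Finset.prod_congr rfl fun i _ => Complex.exp_int_mul _ _
    set M : ℕ := ∑ j, ∑ i : ↥s, (e j i).natAbs with hM
    have hbound : ∀ j (i : ↥s), (0 : ℤ) ≤ e j i + M := by
      intro j i
      have h1 : (e j i).natAbs ≤ ∑ i' : ↥s, (e j i').natAbs :=
        Finset.single_le_sum (f := fun i' : ↥s => (e j i').natAbs)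
          (fun i' _ => Nat.zero_le _) (Finset.mem_univ i)
      have h2 : (∑ i' : ↥s, (e j i').natAbs) ≤ M :=
        Finset.single_le_sum (f := fun j' => ∑ i' : ↥s, (e j' i').natAbs)
          (fun j' _ => Nat.zero_le _) (Finset.mem_univ j)
      have := le_trans h1 h2
      omega
    set f : Fin m → (↥s →₀ ℕ) :=
      fun j => Finsupp.equivFunOnFinite.symm (fun i => (e j i + M).toNat) with hf
    have hfapp : ∀ j (i : ↥s), f j i = (e j i + M).toNat := fun j i => rfl
    have hfinj : Function.Injective f := by
      intro j j' hff
      apply hcinj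
      ext i
      have h1 : (e j i + M).toNat = (e j' i + M).toNat := by
        rw [← hfapp j i, ← hfapp j' i, hff]
      have h2 : e j i = e j' i := by
        have b1 := hbound j i; have b2 := hbound j' i; omega
      have h3 : (c j i : ℚ) * N = c j' i * N := by rw [← he j i, ← he j' i, h2]
      exact mul_right_cancel₀ hNQ h3
    -- transformed vanishing sum
    have hzero2 : ∑ j, a j * ∏ i : ↥s, u i ^ (f j i) = 0 := by
      have hkey : ∀ j, a j * ∏ i : ↥s, u i ^ (f j i)
          = (∏ i : ↥s, u i ^ (M : ℤ)) * (a j * Complex.exp (v j)) := by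
        intro j
        rw [hEj j]
        have : ∀ i : ↥s, u i ^ (f j i) = u i ^ (M : ℤ) * u i ^ (e j i) := by
          intro i
          rw [← zpow_natCast (u i) (f j i), ← zpow_add₀ (hu0 i)]
          congr 1
          have := hbound j i
          rw [hfapp j i]
          omega
        rw [Finset.prod_congr rfl fun i _ => this i, Finset.prod_mul_distrib]
        ring
      rw [Finset.sum_congr rfl fun j _ => hkey j, ← Finset.mul_sum]
      rw [show (∑ j, a j * Complex.exp (v j)) = 0 from hzero, mul_zero]
    -- the polynomial
    set P : MvPolynomial ↥s ↥K := ∑ j, MvPolynomial.monomial (f j)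
      (⟨a j, IntermediateField.subset_adjoin _ _ ⟨j, rfl⟩⟩ : ↥K) with hP
    have hPz : MvPolynomial.aeval u P = 0 := by
      rw [hP, map_sum]
      rw [← hzero2]
      refine Finset.sum_congr rfl fun j _ => ?_
      rw [MvPolynomial.aeval_monomial]
      have h1 : (algebraMap (↥K) ℂ) (⟨a j, IntermediateField.subset_adjoin _ _ ⟨j, rfl⟩⟩ : ↥K)
          = a j := rfl
      rw [h1, Finsupp.prod_fintype _ _ (fun i => pow_zero _)]
    have hP0 : P = 0 := algebraicIndependent_iff.mp huK P hPz
    have hcoeff : MvPolynomial.coeff (f i₀) P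
        = (⟨a i₀, IntermediateField.subset_adjoin _ _ ⟨i₀, rfl⟩⟩ : ↥K) := by
      rw [hP, MvPolynomial.coeff_sum]
      rw [Finset.sum_eq_single i₀]
      · rw [MvPolynomial.coeff_monomial, if_pos rfl]
      · intro j _ hj
        rw [MvPolynomial.coeff_monomial, if_neg (fun hh => hj (hfinj hh))]
      · intro h; exact absurd (Finset.mem_univ i₀) h
    rw [hP0] at hcoeff
    simp only [MvPolynomial.coeff_zero] at hcoeff
    exact ha0 (by simpa using congrArg Subtype.val hcoeff.symm)
end

section
/- Assume Schanuel's conjecture for ℂ. Then e = exp(1) and π are algebraically independent over ℚ. -/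
open MvPolynomial Complex

/-- Even/odd decomposition in the second variable. -/
lemma evenOdd_decomp (q : MvPolynomial (Fin 2) ℚ) :
    ∃ g h : MvPolynomial (Fin 2) ℚ,
      q = aeval ![X 0, X 1 ^ 2] g + X 1 * aeval ![X 0, X 1 ^ 2] h := by
  induction q using MvPolynomial.induction_on' with
  | monomial u a =>
    have hu : (monomial u a : MvPolynomial (Fin 2) ℚ)
        = C a * X 0 ^ (u 0) * X 1 ^ (u 1) := by
      rw [monomial_eq, Finsupp.prod_fintype]
      · rw [Fin.prod_univ_two]; ring
      · intro i; simp
    rcases Nat.even_or_odd (u 1) with ⟨k, hk⟩ | ⟨k, hk⟩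
    · refine ⟨C a * X 0 ^ (u 0) * X 1 ^ k, 0, ?_⟩
      rw [hu, hk]
      simp only [map_mul, map_pow, aeval_X, aeval_C, map_zero, mul_zero, add_zero,
        Matrix.cons_val_zero, Matrix.cons_val_one, Matrix.head_cons, algebraMap_eq]
      ring
    · refine ⟨0, C a * X 0 ^ (u 0) * X 1 ^ k, ?_⟩
      rw [hu, hk]
      simp only [map_mul, map_pow, aeval_X, aeval_C, map_zero, zero_add,
        Matrix.cons_val_zero, Matrix.cons_val_one, Matrix.head_cons, algebraMap_eq]
      ring
  | add p q hp hq =>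
    obtain ⟨g1, h1, rfl⟩ := hp
    obtain ⟨g2, h2, rfl⟩ := hq
    exact ⟨g1 + g2, h1 + h2, by rw [map_add, map_add]; ring⟩

theorem e_pi_algebraically_independent (hSch : SchanuelConjecture) :
    AlgebraicIndependent ℚ ![Complex.exp 1, (Real.pi : ℂ)] := by
  classical
  set z : Fin 2 → ℂ := ![1, (Real.pi : ℂ) * Complex.I] with hz
  have hlin : LinearIndependent ℚ z := by
    rw [hz, LinearIndependent.pair_iff]
    intro s t hst
    have h1 : (s : ℂ) + (t : ℂ) * ((Real.pi : ℂ) * Complex.I) = 0 := by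
      simpa [Rat.smul_def] using hst
    have him : (t : ℝ) * Real.pi = 0 := by
      have := congrArg Complex.im h1
      simpa using this
    have hre : (s : ℝ) = 0 := by
      have := congrArg Complex.re h1
      simpa [mul_assoc] using this
    have ht : (t : ℝ) = 0 := by
      rcases mul_eq_zero.1 him with h | h
      · exact h
      · exact absurd h Real.pi_ne_zero
    constructor
    · exact_mod_cast hre
    · exact_mod_cast ht
  obtain ⟨s, hcard, halg⟩ := hSch 2 z hlin
  -- the four candidate values
  have h00 : (Sum.inl 0 : Fin 2 ⊕ Fin 2) ∉ s := by
    intro h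
    have := halg.transcendental (⟨Sum.inl 0, h⟩ : s)
    simp only [Sum.elim_inl] at this
    exact this (by simpa [hz] using isAlgebraic_one (R := ℚ) (A := ℂ))
  have h11 : (Sum.inr 1 : Fin 2 ⊕ Fin 2) ∉ s := by
    intro h
    have := halg.transcendental (⟨Sum.inr 1, h⟩ : s)
    simp only [Sum.elim_inr] at this
    have hval : Complex.exp (z 1) = -1 := by
      simp [hz, Complex.exp_pi_mul_I]
    rw [hval] at this
    refine this ?_
    have : IsAlgebraic ℚ ((-1 : ℚ) : ℂ) := isAlgebraic_algebraMap (-1 : ℚ)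
    simpa using this
  have hsub : s ⊆ ({Sum.inl 1, Sum.inr 0} : Finset (Fin 2 ⊕ Fin 2)) := by
    intro x hx
    rcases x with i | i <;> fin_cases i
    · exact absurd hx h00
    · simp
    · simp
    · exact absurd hx h11
  have hseq : s = ({Sum.inl 1, Sum.inr 0} : Finset (Fin 2 ⊕ Fin 2)) := by
    apply Finset.eq_of_subset_of_card_le hsub
    calc ({Sum.inl 1, Sum.inr 0} : Finset (Fin 2 ⊕ Fin 2)).card ≤ 2 :=
          Finset.card_insert_le _ _ |>.trans (by simp)
      _ ≤ s.card := hcard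
  have hm1 : (Sum.inr 0 : Fin 2 ⊕ Fin 2) ∈ s := by rw [hseq]; simp
  have hm2 : (Sum.inl 1 : Fin 2 ⊕ Fin 2) ∈ s := by rw [hseq]; simp
  -- extract the pair (e, πI)
  set g : Fin 2 → s := ![⟨Sum.inr 0, hm1⟩, ⟨Sum.inl 1, hm2⟩] with hg
  have hginj : Function.Injective g := by
    intro a b hab
    rw [hg] at hab
    fin_cases a <;> fin_cases b <;> simp only [Matrix.cons_val_zero, Matrix.cons_val_one,
      Matrix.head_cons, Subtype.mk.injEq] at hab ⊢ <;> simp_all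
  have hpair : AlgebraicIndependent ℚ
      ((fun i : s => Sum.elim z (fun j => Complex.exp (z j)) (i : Fin 2 ⊕ Fin 2)) ∘ g) :=
    halg.comp g hginj
  have hfun : ((fun i : s => Sum.elim z (fun j => Complex.exp (z j)) (i : Fin 2 ⊕ Fin 2)) ∘ g)
      = ![Complex.exp 1, (Real.pi : ℂ) * Complex.I] := by
    funext i
    fin_cases i <;> simp [hg, hz]
  rw [hfun] at hpair
  have hinj : ∀ q : MvPolynomial (Fin 2) ℚ,
      aeval ![Complex.exp 1, (Real.pi : ℂ) * Complex.I] q = 0 → q = 0 :=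
    fun q hq => algebraicIndependent_iff.1 hpair q hq
  -- now transfer from (e, πI) to (e, π)
  rw [algebraicIndependent_iff]
  intro p hp
  set σ : MvPolynomial (Fin 2) ℚ →ₐ[ℚ] MvPolynomial (Fin 2) ℚ := aeval ![X 0, -X 1] with hσ
  set τ : MvPolynomial (Fin 2) ℚ →ₐ[ℚ] MvPolynomial (Fin 2) ℚ := aeval ![X 0, X 1 ^ 2] with hτ
  have hσσ : σ.comp σ = AlgHom.id ℚ _ := by
    apply MvPolynomial.algHom_ext
    intro i
    fin_cases i <;> simp [hσ]
  have hσinj : Function.Injective σ := by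
    intro a b hab
    have := congrArg σ hab
    rwa [← AlgHom.comp_apply, ← AlgHom.comp_apply, hσσ, AlgHom.id_apply, AlgHom.id_apply] at this
  have hτinj : Function.Injective τ := by
    have hti : AlgebraicIndependent ℚ (![X 0, X 1 ^ 2] : Fin 2 → MvPolynomial (Fin 2) ℚ) := by
      have := MvPolynomial.algebraicIndependent_polynomial_aeval_X (R := ℚ) (ι := Fin 2)
        ![Polynomial.X, Polynomial.X ^ 2] ?_
      · convert this using 1
        funext i
        fin_cases i <;> simp
      · intro i
        fin_cases i
        · exact Polynomial.transcendental_X ℚ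
        · exact (Polynomial.transcendental_X ℚ).pow two_pos
    exact algebraicIndependent_iff_injective_aeval.1 hti
  -- q = p * σ p is even in X 1
  set q : MvPolynomial (Fin 2) ℚ := p * σ p with hq
  obtain ⟨a, b, hab⟩ := evenOdd_decomp q
  have hστ : σ.comp τ = τ := by
    apply MvPolynomial.algHom_ext
    intro i
    fin_cases i <;> simp [hσ, hτ]
  have hσq : σ q = q := by
    rw [hq, map_mul, ← AlgHom.comp_apply, hσσ, AlgHom.id_apply, mul_comm]
  have hb0 : τ b = 0 := by
    have h1 : σ q = τ a - X 1 * τ b := by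
      rw [hab, map_add, map_mul, ← AlgHom.comp_apply, ← AlgHom.comp_apply, hστ]
      have : σ (X 1) = -X 1 := by simp [hσ]
      rw [this]
      ring
    have h2 : τ a + X 1 * τ b = τ a - X 1 * τ b := by
      rw [← hab, ← h1, hσq]
    have h3 : (2 : MvPolynomial (Fin 2) ℚ) * (X 1 * τ b) = 0 := by linear_combination h2
    have h4 : X 1 * τ b = 0 := by
      rcases mul_eq_zero.1 h3 with h | h
      · exact absurd h two_ne_zero
      · exact h
    rcases mul_eq_zero.1 h4 with h | h
    · exact absurd h (MvPolynomial.X_ne_zero 1)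
    · exact h
  have hqa : q = τ a := by rw [hab, hb0, mul_zero, add_zero]
  -- evaluate
  have hcomp4 : (aeval ![Complex.exp 1, (Real.pi : ℂ)]).comp τ
      = aeval ![Complex.exp 1, (Real.pi : ℂ) ^ 2] := by
    apply MvPolynomial.algHom_ext
    intro i
    fin_cases i <;> simp [hτ]
  have hqeval : aeval ![Complex.exp 1, (Real.pi : ℂ) ^ 2] a = 0 := by
    have : aeval ![Complex.exp 1, (Real.pi : ℂ)] q = 0 := by
      rw [hq, map_mul, hp, zero_mul]
    rw [hqa, ← AlgHom.comp_apply, hcomp4] at this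
    exact this
  have hcomp5 : (aeval ![Complex.exp 1, (Real.pi : ℂ) * Complex.I]).comp (τ.comp σ)
      = aeval ![Complex.exp 1, (Real.pi : ℂ) ^ 2] := by
    apply MvPolynomial.algHom_ext
    intro i
    fin_cases i <;> simp [hσ, hτ, mul_pow, Complex.I_sq]
  have ha0 : a = 0 := by
    have heval : aeval ![Complex.exp 1, (Real.pi : ℂ) * Complex.I] (τ (σ a)) = 0 := by
      rw [← AlgHom.comp_apply, ← AlgHom.comp_apply, AlgHom.comp_assoc, hcomp5]
      exact hqeval
    have h5 : τ (σ a) = 0 := hinj _ heval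
    have h6 : σ a = 0 := hτinj (by rw [h5, map_zero])
    exact hσinj (by rw [h6, map_zero])
  have hq0 : q = 0 := by rw [hqa, ha0, map_zero]
  rcases mul_eq_zero.1 (hq.symm.trans hq0 :) with h | h
  · exact h
  · exact hσinj (by rw [h, map_zero])
end
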